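/- arXiv:1102.4030 — 6 statements merged into one kernel-verified Lean document; each statement's English description precedes it below -/
import Mathlib

section
/- Let g ≥ 2 and let Σ_g be the genus-g surface group with its standard generating set X. Then F^{nil}_{Σ_g,X}(n) ≽ 2^{√n}: there exists a natural number M ≥ 1 such that 2^{⌊√n⌋} ≤ M · F^{nil}_{Σ_g,X}(M·n) for all n ≥ 1 (inequality in ℕ∞). -/
open scoped ENat
open scoped commutatorElement

/-- `γ` is a product of at most `n` elements of `X ∪ X⁻¹`. -/
def wordLenLE {G : Type*} [Group G] (X : Set G) (γ : G) (n : ℕ) : Prop :=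
  ∃ w : List G, w.length ≤ n ∧ (∀ x ∈ w, x ∈ X ∨ x⁻¹ ∈ X) ∧ w.prod = γ

/-- `D^P_Γ(γ)`: the minimal cardinality of a finite quotient of `Γ` with property `P`
detecting `γ`. -/
noncomputable def DQuot {G : Type*} [Group G] (P : GrpCat.{0} → Prop) (γ : G) : ℕ∞ :=
  sInf {c : ℕ∞ | ∃ (Q : GrpCat.{0}) (φ : G →* ↥Q), Finite ↥Q ∧ P Q ∧
    Function.Surjective φ ∧ φ γ ≠ 1 ∧ c = (Nat.card ↥Q : ℕ∞)}

/-- `F^P_{Γ,X}(n)`: residual finiteness growth. -/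
noncomputable def FGrowth {G : Type*} [Group G] (P : GrpCat.{0} → Prop) (X : Set G) (n : ℕ) : ℕ∞ :=
  ⨆ (γ : G) (_ : γ ≠ 1) (_ : wordLenLE X γ n), DQuot P γ

def allFiniteClass : GrpCat.{0} → Prop := fun _ => True

def solvableClass : GrpCat.{0} → Prop := fun Q => IsSolvable ↥Q

def nilpotentClass : GrpCat.{0} → Prop := fun Q => Group.IsNilpotent ↥Q

/-- `F^P_{Γ,X}` is at most polynomial in `log n`. -/
def PolyLogBounded {G : Type*} [Group G] (P : GrpCat.{0} → Prop) (X : Set G) : Prop :=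
  ∃ M r : ℕ, 1 ≤ M ∧ ∀ n : ℕ, 1 ≤ n →
    FGrowth P X n ≤ ((M * ⌈Real.log (M * n) ^ r⌉₊ : ℕ) : ℕ∞)

def VirtuallyNilpotent (G : Type*) [Group G] : Prop :=
  ∃ H : Subgroup G, H.FiniteIndex ∧ Group.IsNilpotent H

/-- The surface relator `[a₁,b₁][a₂,b₂]⋯[a_g,b_g]` in the free group on
`a_i = (i, false)`, `b_i = (i, true)`. -/
def surfaceRelator (g : ℕ) : FreeGroup (Fin g × Bool) :=
  (List.ofFn fun i : Fin g =>
    ⁅FreeGroup.of (i, false), FreeGroup.of (i, true)⁆).prod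

/-- The genus-`g` surface group `⟨a₁,b₁,…,a_g,b_g ∣ [a₁,b₁]⋯[a_g,b_g]⟩`. -/
abbrev SurfaceGroup (g : ℕ) : Type :=
  PresentedGroup ({surfaceRelator g} : Set (FreeGroup (Fin g × Bool)))

/-- The standard generating set of the surface group. -/
def surfaceGenSet (g : ℕ) : Set (SurfaceGroup g) :=
  Set.range (fun s : Fin g × Bool => PresentedGroup.of s)

namespace SG

open FreeGroup List


def R (p q : Bool × Bool) : Prop := ¬(p.1 = q.1 ∧ p.2 = !q.2)

instance : DecidableRel R := fun _ _ => instDecidableNot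

lemma chain'_reduce (L : List (Bool × Bool)) : List.IsChain R (reduce L) := by
  induction L with
  | nil => simp
  | cons x L ih =>
    rw [reduce.cons]
    cases h : reduce L with
    | nil => simp
    | cons hd tl =>
      rw [h] at ih
      dsimp only
      split_ifs with hc
      · exact ih.tail
      · exact List.isChain_cons_cons.mpr ⟨hc, ih⟩

lemma reduce_eq_self_of_chain' {L : List (Bool × Bool)} (h : List.IsChain R L) :
    reduce L = L := by
  induction L with
  | nil => rfl
  | cons x L ih =>
    have hL : reduce L = L := ih h.tail
    rw [reduce.cons, hL]
    cases L with
    | nil => rfl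
    | cons hd tl =>
      have hR : R x hd := (List.isChain_cons_cons.mp h).1
      simp only [R] at hR
      dsimp only
      exact if_neg hR

def blk : Bool × Bool → List (Bool × Bool)
  | (false, true) => [(false,true),(true,true),(false,false),(true,false)]
  | (false, false) => [(true,true),(false,true),(true,false),(false,false)]
  | (true, true) => [(false,false),(true,false),(false,true),(true,true)]
  | (true, false) => [(true,false),(false,false),(true,true),(false,true)]

lemma blk_ne_nil (p : Bool × Bool) : blk p ≠ [] := by
  rcases p with ⟨a, b⟩; cases a <;> cases b <;> simp [blk]

lemma blk_chain' : ∀ p : Bool × Bool, List.IsChain R (blk p) := by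
  rintro ⟨a, b⟩
  cases a <;> cases b <;> simp [blk, List.isChain_cons_cons, R]

lemma blk_junction (p q : Bool × Bool) (h : R p q) :
    ∀ x ∈ (blk p).getLast?, ∀ y ∈ (blk q).head?, R x y := by
  rcases p with ⟨a, b⟩; rcases q with ⟨c, d⟩
  revert h
  cases a <;> cases b <;> cases c <;> cases d <;> simp_all [blk, R]

lemma chain'_flatMap_blk : ∀ L : List (Bool × Bool), List.IsChain R L →
    List.IsChain R (L.flatMap blk)
  | [], _ => by simp
  | [p], _ => by simpa using blk_chain' p
  | p :: q :: L, h => by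
    rw [List.flatMap_cons]
    refine List.isChain_append.mpr ⟨blk_chain' p, chain'_flatMap_blk (q :: L) h.tail, ?_⟩
    intro x hx y hy
    rw [List.flatMap_cons, List.head?_append_of_ne_nil _ (blk_ne_nil q)] at hy
    exact blk_junction p q (List.isChain_cons_cons.mp h).1 x hx y hy

def A : FreeGroup Bool := ⁅FreeGroup.of false, FreeGroup.of true⁆
def B : FreeGroup Bool := ⁅(FreeGroup.of false)⁻¹, (FreeGroup.of true)⁻¹⁆

noncomputable def φ : FreeGroup Bool →* FreeGroup Bool :=
  FreeGroup.lift (fun b => if b then B else A)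

lemma phi_of_false : φ (FreeGroup.of false) = A := by simp [φ]
lemma phi_of_true : φ (FreeGroup.of true) = B := by simp [φ]

lemma mk_blk (p : Bool × Bool) : FreeGroup.mk (blk p) = φ (FreeGroup.mk [p]) := by
  have h1 : ∀ a : Bool, FreeGroup.mk [(a, true)] = FreeGroup.of a := fun _ => rfl
  have h2 : ∀ a : Bool, FreeGroup.mk [(a, false)] = (FreeGroup.of a)⁻¹ := by decide
  rcases p with ⟨a, b⟩
  cases a <;> cases b
  · rw [h2, _root_.map_inv, phi_of_false]; decide +kernel
  · rw [h1, phi_of_false]; decide +kernel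
  · rw [h2, _root_.map_inv, phi_of_true]; decide +kernel
  · rw [h1, phi_of_true]; decide +kernel

lemma mk_flatMap (L : List (Bool × Bool)) :
    FreeGroup.mk (L.flatMap blk) = φ (FreeGroup.mk L) := by
  induction L with
  | nil =>
    rw [List.flatMap_nil]
    rw [show FreeGroup.mk ([] : List (Bool × Bool)) = 1 from rfl, _root_.map_one]
  | cons p L ih =>
    have hsplit : FreeGroup.mk (p :: L) = FreeGroup.mk [p] * FreeGroup.mk L := by
      rw [FreeGroup.mul_mk]; rfl
    rw [List.flatMap_cons, ← FreeGroup.mul_mk, ih, mk_blk, hsplit]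
    exact (_root_.map_mul φ _ _).symm

lemma phi_ne_one {z : FreeGroup Bool} (hz : z ≠ 1) : φ z ≠ 1 := by
  have hchain : List.IsChain R z.toWord := by
    have := chain'_reduce z.toWord
    rwa [reduce_toWord] at this
  have hne : z.toWord ≠ [] := fun h => hz (FreeGroup.toWord_eq_nil_iff.mp h)
  have hφ : φ z = FreeGroup.mk (z.toWord.flatMap blk) := by
    rw [mk_flatMap, FreeGroup.mk_toWord]
  intro h1
  have hW : (φ z).toWord = [] := by rw [h1]; exact FreeGroup.toWord_one
  rw [hφ, FreeGroup.toWord_mk, reduce_eq_self_of_chain' (chain'_flatMap_blk _ hchain)] at hW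
  cases hL : z.toWord with
  | nil => exact hne hL
  | cons p L =>
    rw [hL, List.flatMap_cons, List.append_eq_nil_iff] at hW
    exact blk_ne_nil p hW.1



lemma lcs_succ (G : Type*) [Group G] (n : ℕ) :
    Subgroup.lowerCentralSeries (⊤ : Subgroup G) (n + 1) = ⁅Subgroup.lowerCentralSeries (⊤ : Subgroup G) n, (⊤ : Subgroup G)⁆ := rfl

theorem lcs_comm_le (G : Type*) [Group G] :
    ∀ m n : ℕ, ⁅Subgroup.lowerCentralSeries (⊤ : Subgroup G) m, Subgroup.lowerCentralSeries (⊤ : Subgroup G) n⁆ ≤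
      Subgroup.lowerCentralSeries (⊤ : Subgroup G) (m + n + 1) := by
  intro m
  induction m with
  | zero =>
    intro n
    rw [lowerCentralSeries_zero, Subgroup.commutator_comm, Nat.zero_add]
    exact le_of_eq (lcs_succ G n).symm
  | succ m ih =>
    intro n
    have hNnormal : (Subgroup.lowerCentralSeries (⊤ : Subgroup G) (m + 1 + n + 1)).Normal := inferInstance
    have hker : ∀ K : Subgroup G, K ≤ Subgroup.lowerCentralSeries (⊤ : Subgroup G) (m + 1 + n + 1) →
        Subgroup.map (QuotientGroup.mk' (Subgroup.lowerCentralSeries (⊤ : Subgroup G) (m + 1 + n + 1))) K = ⊥ := by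
      intro K hK
      rw [Subgroup.map_eq_bot_iff, QuotientGroup.ker_mk']
      exact hK
    have h1 : ⁅⁅Subgroup.lowerCentralSeries (⊤ : Subgroup G) n, Subgroup.lowerCentralSeries (⊤ : Subgroup G) m⁆, (⊤ : Subgroup G)⁆ ≤
        Subgroup.lowerCentralSeries (⊤ : Subgroup G) (m + 1 + n + 1) := by
      have e1 : ⁅Subgroup.lowerCentralSeries (⊤ : Subgroup G) n, Subgroup.lowerCentralSeries (⊤ : Subgroup G) m⁆ ≤
          Subgroup.lowerCentralSeries (⊤ : Subgroup G) (m + n + 1) := by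
        rw [Subgroup.commutator_comm]; exact ih n
      have e2 := Subgroup.commutator_mono (H₂ := (⊤ : Subgroup G)) e1 le_rfl
      have e4 : Subgroup.lowerCentralSeries (⊤ : Subgroup G) (m + 1 + n + 1) =
          ⁅Subgroup.lowerCentralSeries (⊤ : Subgroup G) (m + n + 1), (⊤ : Subgroup G)⁆ := by
        rw [show m + 1 + n + 1 = (m + n + 1) + 1 from by omega]
        exact lcs_succ G _
      exact le_trans e2 (le_of_eq e4.symm)
    have h2 : ⁅⁅(⊤ : Subgroup G), Subgroup.lowerCentralSeries (⊤ : Subgroup G) n⁆, Subgroup.lowerCentralSeries (⊤ : Subgroup G) m⁆ ≤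
        Subgroup.lowerCentralSeries (⊤ : Subgroup G) (m + 1 + n + 1) := by
      have e1 : ⁅(⊤ : Subgroup G), Subgroup.lowerCentralSeries (⊤ : Subgroup G) n⁆ =
          Subgroup.lowerCentralSeries (⊤ : Subgroup G) (n + 1) := by
        rw [Subgroup.commutator_comm]; exact (lcs_succ G n).symm
      rw [e1, Subgroup.commutator_comm]
      have := ih (n + 1)
      have e3 : m + (n + 1) + 1 = m + 1 + n + 1 := by omega
      rwa [e3] at this
    have key : Subgroup.map (QuotientGroup.mk' (Subgroup.lowerCentralSeries (⊤ : Subgroup G) (m + 1 + n + 1)))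
        ⁅⁅Subgroup.lowerCentralSeries (⊤ : Subgroup G) m, (⊤ : Subgroup G)⁆, Subgroup.lowerCentralSeries (⊤ : Subgroup G) n⁆ = ⊥ := by
      rw [Subgroup.map_commutator, Subgroup.map_commutator]
      apply Subgroup.commutator_commutator_eq_bot_of_rotate
      · rw [← Subgroup.map_commutator, ← Subgroup.map_commutator]
        exact hker _ h2
      · rw [← Subgroup.map_commutator, ← Subgroup.map_commutator]
        exact hker _ h1
    have hfin : ⁅⁅Subgroup.lowerCentralSeries (⊤ : Subgroup G) m, (⊤ : Subgroup G)⁆, Subgroup.lowerCentralSeries (⊤ : Subgroup G) n⁆ ≤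
        Subgroup.lowerCentralSeries (⊤ : Subgroup G) (m + 1 + n + 1) := by
      rw [Subgroup.map_eq_bot_iff, QuotientGroup.ker_mk'] at key
      exact key
    rwa [← lcs_succ] at hfin

theorem card_ge_of_mem_lcs {Q : Type*} [Group Q] [Finite Q]
    (hQ : Group.IsNilpotent Q) {k : ℕ} {x : Q}
    (hx : x ∈ Subgroup.lowerCentralSeries (⊤ : Subgroup Q) k) (hx1 : x ≠ 1) :
    2 ^ (k + 1) ≤ Nat.card Q := by
  have hbot : ∀ i ≤ k, Subgroup.lowerCentralSeries (⊤ : Subgroup Q) (i + 1) ≠ Subgroup.lowerCentralSeries (⊤ : Subgroup Q) i := by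
    intro i hi heq
    have hstab : ∀ j, Subgroup.lowerCentralSeries (⊤ : Subgroup Q) (i + j) = Subgroup.lowerCentralSeries (⊤ : Subgroup Q) i := by
      intro j
      induction j with
      | zero => rfl
      | succ j ihj =>
        rw [← Nat.add_assoc, lcs_succ, ihj, ← lcs_succ, heq]
    obtain ⟨n, hn⟩ := nilpotent_iff_lowerCentralSeries.mp hQ
    have hbot' : Subgroup.lowerCentralSeries (⊤ : Subgroup Q) i = ⊥ := by
      rcases le_or_gt n i with h | h
      · exact le_bot_iff.mp (hn ▸ lowerCentralSeries_antitone _ h)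
      · rw [← hstab (n - i), Nat.add_sub_cancel' h.le, hn]
    have : x ∈ Subgroup.lowerCentralSeries (⊤ : Subgroup Q) i := lowerCentralSeries_antitone _ hi hx
    rw [hbot'] at this
    exact hx1 (Subgroup.mem_bot.mp this)
  have main : ∀ j ≤ k + 1, 2 ^ j ≤ Nat.card (Subgroup.lowerCentralSeries (⊤ : Subgroup Q) (k + 1 - j)) := by
    intro j
    induction j with
    | zero => intro _; simpa using Nat.one_le_iff_ne_zero.mpr Nat.card_pos.ne'
    | succ j ihj =>
      intro hj
      have hjk : j ≤ k + 1 := Nat.le_of_succ_le hj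
      have hi : k + 1 - j = (k + 1 - (j + 1)) + 1 := by omega
      set i := k + 1 - (j + 1) with hidef
      have hik : i ≤ k := by omega
      have hle : Subgroup.lowerCentralSeries (⊤ : Subgroup Q) (i + 1) ≤ Subgroup.lowerCentralSeries (⊤ : Subgroup Q) i :=
        lowerCentralSeries_antitone _ (Nat.le_succ i)
      have hne : Subgroup.lowerCentralSeries (⊤ : Subgroup Q) (i + 1) ≠ Subgroup.lowerCentralSeries (⊤ : Subgroup Q) i := hbot i hik
      have hdvd : Nat.card (Subgroup.lowerCentralSeries (⊤ : Subgroup Q) (i + 1)) ∣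
          Nat.card (Subgroup.lowerCentralSeries (⊤ : Subgroup Q) i) := Subgroup.card_dvd_of_le hle
      obtain ⟨t, ht⟩ := hdvd
      have hpos : 0 < Nat.card (Subgroup.lowerCentralSeries (⊤ : Subgroup Q) i) := Nat.card_pos
      have ht2 : 2 ≤ t := by
        rcases Nat.lt_or_ge t 2 with h | h
        · interval_cases t
          · simp [ht] at hpos
          · exfalso
            apply hne
            exact Subgroup.eq_of_le_of_card_ge hle (by omega)
        · exact h
      have h2j : 2 ^ j ≤ Nat.card (Subgroup.lowerCentralSeries (⊤ : Subgroup Q) (i + 1)) := by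
        have := ihj hjk
        rwa [hi] at this
      calc 2 ^ (j + 1) = 2 ^ j * 2 := by ring
        _ ≤ Nat.card (Subgroup.lowerCentralSeries (⊤ : Subgroup Q) (i + 1)) * t := Nat.mul_le_mul h2j ht2
        _ = Nat.card (Subgroup.lowerCentralSeries (⊤ : Subgroup Q) i) := ht.symm
  have := main (k + 1) le_rfl
  rw [Nat.sub_self, lowerCentralSeries_zero, Subgroup.card_top] at this
  exact this

noncomputable def uv : ℕ → FreeGroup Bool × FreeGroup Bool
  | 0 => (FreeGroup.of false, FreeGroup.of true)
  | d + 1 => (⁅(uv d).1, (uv d).2⁆, ⁅(uv d).1⁻¹, (uv d).2⁻¹⁆)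

lemma phi_uv : ∀ d, φ (uv d).1 = (uv (d + 1)).1 ∧ φ (uv d).2 = (uv (d + 1)).2 := by
  intro d
  induction d with
  | zero => exact ⟨phi_of_false.trans rfl, phi_of_true.trans rfl⟩
  | succ d ih =>
    constructor
    · show φ ⁅(uv d).1, (uv d).2⁆ = ⁅(uv (d+1)).1, (uv (d+1)).2⁆
      rw [map_commutatorElement, ih.1, ih.2]
    · show φ ⁅(uv d).1⁻¹, (uv d).2⁻¹⁆ = ⁅(uv (d+1)).1⁻¹, (uv (d+1)).2⁻¹⁆
      rw [map_commutatorElement, _root_.map_inv, _root_.map_inv, ih.1, ih.2]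

lemma comm_uv_ne_one : ∀ d, ⁅(uv d).1, (uv d).2⁆ ≠ 1 := by
  intro d
  induction d with
  | zero => show ⁅FreeGroup.of false, FreeGroup.of true⁆ ≠ 1; decide
  | succ d ih =>
    have : ⁅(uv (d+1)).1, (uv (d+1)).2⁆ = φ ⁅(uv d).1, (uv d).2⁆ := by
      rw [map_commutatorElement, (phi_uv d).1, (phi_uv d).2]
    rw [this]
    exact phi_ne_one ih

lemma uv_ne_one : ∀ d, (uv d).1 ≠ 1
  | 0 => by show FreeGroup.of false ≠ 1; decide
  | d + 1 => comm_uv_ne_one d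

lemma uv_mem_lcs : ∀ d, (uv d).1 ∈ Subgroup.lowerCentralSeries (⊤ : Subgroup (FreeGroup Bool)) (2 ^ d - 1) ∧
    (uv d).2 ∈ Subgroup.lowerCentralSeries (⊤ : Subgroup (FreeGroup Bool)) (2 ^ d - 1) := by
  intro d
  induction d with
  | zero => exact ⟨Subgroup.mem_top _, Subgroup.mem_top _⟩
  | succ d ih =>
    have h1 : (1 : ℕ) ≤ 2 ^ d := Nat.one_le_two_pow
    have he : (2 ^ d - 1) + (2 ^ d - 1) + 1 = 2 ^ (d + 1) - 1 := by
      rw [pow_succ]; omega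
    constructor
    · show ⁅(uv d).1, (uv d).2⁆ ∈ _
      refine he ▸ lcs_comm_le _ _ _ (Subgroup.commutator_mem_commutator ih.1 ih.2)
    · show ⁅(uv d).1⁻¹, (uv d).2⁻¹⁆ ∈ _
      exact he ▸ lcs_comm_le _ _ _
        (Subgroup.commutator_mem_commutator (inv_mem ih.1) (inv_mem ih.2))

/- word length lemmas -/
lemma wordLenLE_mono {G : Type*} [Group G] {X : Set G} {a : G} {n m : ℕ}
    (hnm : n ≤ m) (h : wordLenLE X a n) : wordLenLE X a m := by
  obtain ⟨w, h1, h2, h3⟩ := h; exact ⟨w, h1.trans hnm, h2, h3⟩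

lemma wordLenLE_inv {G : Type*} [Group G] {X : Set G} {a : G} {n : ℕ}
    (h : wordLenLE X a n) : wordLenLE X a⁻¹ n := by
  obtain ⟨w, h1, h2, h3⟩ := h
  refine ⟨(w.map fun x => x⁻¹).reverse, by simpa using h1, ?_, ?_⟩
  · intro x hx
    simp only [List.mem_reverse, List.mem_map] at hx
    obtain ⟨y, hy, rfl⟩ := hx
    rcases h2 y hy with h | h
    · right; simpa using h
    · left; exact h
  · rw [← List.prod_inv_reverse, h3]

lemma wordLenLE_mul {G : Type*} [Group G] {X : Set G} {a b : G} {n m : ℕ}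
    (ha : wordLenLE X a n) (hb : wordLenLE X b m) : wordLenLE X (a * b) (n + m) := by
  obtain ⟨w1, h1, h2, h3⟩ := ha
  obtain ⟨w2, g1, g2, g3⟩ := hb
  refine ⟨w1 ++ w2, by simpa using Nat.add_le_add h1 g1, ?_, by rw [List.prod_append, h3, g3]⟩
  intro x hx
  rcases List.mem_append.mp hx with h | h
  · exact h2 x h
  · exact g2 x h

lemma wordLenLE_comm {G : Type*} [Group G] {X : Set G} {a b : G} {n m : ℕ}
    (ha : wordLenLE X a n) (hb : wordLenLE X b m) :
    wordLenLE X ⁅a, b⁆ (2 * (n + m)) := by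
  have : ⁅a, b⁆ = a * b * a⁻¹ * b⁻¹ := commutatorElement_def a b
  rw [this]
  have := wordLenLE_mul (wordLenLE_mul (wordLenLE_mul ha hb) (wordLenLE_inv ha))
    (wordLenLE_inv hb)
  refine wordLenLE_mono ?_ this
  omega


section Surface

variable (g : ℕ)

noncomputable def ι (hg : 2 ≤ g) : FreeGroup Bool →* SurfaceGroup g :=
  FreeGroup.lift fun b =>
    PresentedGroup.of (if b then (⟨1, by omega⟩ : Fin g) else ⟨0, by omega⟩, false)

def fdown : Fin g × Bool → FreeGroup Bool := fun s =>
  if s.2 then 1 else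
    if (s.1 : ℕ) = 0 then FreeGroup.of false
    else if (s.1 : ℕ) = 1 then FreeGroup.of true else 1

lemma fdown_relator :
    ∀ r ∈ ({surfaceRelator g} : Set (FreeGroup (Fin g × Bool))),
      FreeGroup.lift (fdown g) r = 1 := by
  intro r hr
  rcases hr with rfl
  rw [surfaceRelator, map_list_prod, List.map_ofFn]
  apply List.prod_eq_one
  intro x hx
  rw [List.mem_ofFn] at hx
  obtain ⟨i, rfl⟩ := hx
  show FreeGroup.lift (fdown g) ⁅FreeGroup.of (i, false), FreeGroup.of (i, true)⁆ = 1
  rw [map_commutatorElement, FreeGroup.lift_apply_of, FreeGroup.lift_apply_of]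
  have : fdown g (i, true) = 1 := rfl
  rw [this, commutatorElement_one_right]

noncomputable def θ : SurfaceGroup g →* FreeGroup Bool :=
  PresentedGroup.toGroup (fdown_relator g)

lemma theta_iota (hg : 2 ≤ g) (z : FreeGroup Bool) : θ g (ι g hg z) = z := by
  have : (θ g).comp (ι g hg) = MonoidHom.id (FreeGroup Bool) := by
    apply FreeGroup.ext_hom
    intro a
    show θ g (ι g hg (FreeGroup.of a)) = FreeGroup.of a
    rw [ι, FreeGroup.lift_apply_of]
    cases a
    · show θ g (PresentedGroup.of _) = _
      rw [θ, PresentedGroup.toGroup.of]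
      simp [fdown]
    · show θ g (PresentedGroup.of _) = _
      rw [θ, PresentedGroup.toGroup.of]
      have h01 : ((⟨1, by omega⟩ : Fin g) : ℕ) = 1 := rfl
      simp [fdown, h01]
  calc θ g (ι g hg z) = ((θ g).comp (ι g hg)) z := rfl
    _ = z := by rw [this]; rfl

lemma iota_uv_ne_one (hg : 2 ≤ g) (d : ℕ) : ι g hg (uv d).1 ≠ 1 := by
  intro h
  have := theta_iota g hg (uv d).1
  rw [h, _root_.map_one] at this
  exact uv_ne_one d this.symm

lemma iota_uv_mem_lcs (hg : 2 ≤ g) (d : ℕ) :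
    ι g hg (uv d).1 ∈ Subgroup.lowerCentralSeries (⊤ : Subgroup (SurfaceGroup g)) (2 ^ d - 1) :=
  lowerCentralSeries.map (ι g hg) _ (Subgroup.mem_map_of_mem _ (uv_mem_lcs d).1)

lemma iota_uv_wordLen (hg : 2 ≤ g) (d : ℕ) :
    wordLenLE (surfaceGenSet g) (ι g hg (uv d).1) (4 ^ d) ∧
    wordLenLE (surfaceGenSet g) (ι g hg (uv d).2) (4 ^ d) := by
  induction d with
  | zero =>
    have hmem : ∀ s : Fin g × Bool, ∀ x ∈ [PresentedGroup.of (rels := ({surfaceRelator g} : Set (FreeGroup (Fin g × Bool)))) s],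
        x ∈ surfaceGenSet g ∨ x⁻¹ ∈ surfaceGenSet g := by
      intro s x hx
      rw [List.mem_singleton] at hx
      subst hx
      left
      exact Set.mem_range_self _
    constructor
    · refine ⟨[PresentedGroup.of ((⟨0, by omega⟩ : Fin g), false)], by simp, hmem _, ?_⟩
      show _ = ι g hg (FreeGroup.of false)
      rw [ι, FreeGroup.lift_apply_of]
      simp
    · refine ⟨[PresentedGroup.of ((⟨1, by omega⟩ : Fin g), false)], by simp, hmem _, ?_⟩
      show _ = ι g hg (FreeGroup.of true)
      rw [ι, FreeGroup.lift_apply_of]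
      simp
  | succ d ih =>
    have h4 : 2 * (4 ^ d + 4 ^ d) = 4 ^ (d + 1) := by ring
    constructor
    · show wordLenLE _ (ι g hg ⁅(uv d).1, (uv d).2⁆) _
      rw [map_commutatorElement]
      exact h4 ▸ wordLenLE_comm ih.1 ih.2
    · show wordLenLE _ (ι g hg ⁅(uv d).1⁻¹, (uv d).2⁻¹⁆) _
      rw [map_commutatorElement, _root_.map_inv, _root_.map_inv]
      exact h4 ▸ wordLenLE_comm (wordLenLE_inv ih.1) (wordLenLE_inv ih.2)

end Surface

lemma DQuot_ge {G' : Type} [Group G'] {γ : G'} {k : ℕ}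
    (hm : γ ∈ Subgroup.lowerCentralSeries (⊤ : Subgroup G') k) :
    ((2 ^ (k + 1) : ℕ) : ℕ∞) ≤ DQuot nilpotentClass γ := by
  apply le_sInf
  rintro c ⟨Q, ψ, hfin, hnil, _hsurj, hne, rfl⟩
  have hmem : ψ γ ∈ Subgroup.lowerCentralSeries (⊤ : Subgroup ↥Q) k :=
    lowerCentralSeries.map ψ k (Subgroup.mem_map_of_mem _ hm)
  exact_mod_cast card_ge_of_mem_lcs hnil hmem hne

lemma le_FGrowth {G' : Type} [Group G'] {P : GrpCat.{0} → Prop} {X : Set G'} {γ : G'} {N : ℕ}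
    (h1 : γ ≠ 1) (h2 : wordLenLE X γ N) : DQuot P γ ≤ FGrowth P X N := by
  calc DQuot P γ ≤ ⨆ (_ : wordLenLE X γ N), DQuot P γ :=
        le_iSup (fun _ : wordLenLE X γ N => DQuot P γ) h2
    _ ≤ ⨆ (_ : γ ≠ 1) (_ : wordLenLE X γ N), DQuot P γ :=
        le_iSup (fun _ : γ ≠ 1 => ⨆ (_ : wordLenLE X γ N), DQuot P γ) h1
    _ ≤ FGrowth P X N := le_iSup (fun γ => ⨆ (_ : γ ≠ 1) (_ : wordLenLE X γ N), DQuot P γ) γ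


end SG

theorem stmt2 (g : ℕ) (hg : 2 ≤ g) :
    ∃ M : ℕ, 1 ≤ M ∧ ∀ n : ℕ, 1 ≤ n →
      ((2 ^ Nat.sqrt n : ℕ) : ℕ∞) ≤
        (M : ℕ∞) * FGrowth nilpotentClass (surfaceGenSet g) (M * n) := by
  refine ⟨4, by norm_num, ?_⟩
  intro n hn
  set c := Nat.sqrt n with hc
  have hc1 : 1 ≤ c := by
    have := Nat.sqrt_pos.mpr (by omega : 0 < n)
    omega
  set d := Nat.clog 2 c with hd
  have hcd : c ≤ 2 ^ d := Nat.le_pow_clog one_lt_two c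
  -- word length bound : 4 ^ d ≤ 4 * n
  have h2d : 2 ^ d ≤ 2 * c := by
    rcases Nat.eq_zero_or_pos d with h0 | hpos
    · rw [h0]; omega
    · have hc2 : 2 ≤ c := by
        by_contra hlt
        have : c ≤ 1 := by omega
        have : d = 0 := by rw [hd, Nat.clog_of_right_le_one this]
        omega
      have hpred : 2 ^ (d - 1) < c := Nat.pow_pred_clog_lt_self one_lt_two hc2
      have : 2 ^ d = 2 * 2 ^ (d - 1) := by
        rw [← pow_succ']
        congr 1
        omega
      omega
  have h4d : 4 ^ d ≤ 4 * n := by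
    have hcc : c * c ≤ n := by
      have := Nat.sqrt_le' n
      rwa [pow_two] at this
    calc 4 ^ d = 2 ^ d * 2 ^ d := by rw [← mul_pow]; norm_num
      _ ≤ (2 * c) * (2 * c) := Nat.mul_le_mul h2d h2d
      _ = 4 * (c * c) := by ring
      _ ≤ 4 * n := by omega
  -- the element
  set γ := SG.ι g hg (SG.uv d).1 with hγ
  have hγ1 : γ ≠ 1 := SG.iota_uv_ne_one g hg d
  have hγw : wordLenLE (surfaceGenSet g) γ (4 * n) :=
    SG.wordLenLE_mono h4d (SG.iota_uv_wordLen g hg d).1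
  have hγm : γ ∈ Subgroup.lowerCentralSeries (⊤ : Subgroup (SurfaceGroup g)) (2 ^ d - 1) :=
    SG.iota_uv_mem_lcs g hg d
  have hD : ((2 ^ ((2 ^ d - 1) + 1) : ℕ) : ℕ∞) ≤ DQuot nilpotentClass γ := SG.DQuot_ge hγm
  have hF : DQuot nilpotentClass γ ≤ FGrowth nilpotentClass (surfaceGenSet g) (4 * n) :=
    SG.le_FGrowth hγ1 hγw
  have hexp : (2 : ℕ) ^ c ≤ 2 ^ ((2 ^ d - 1) + 1) := by
    apply Nat.pow_le_pow_right (by norm_num)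
    have : (2 ^ d - 1) + 1 = 2 ^ d := by
      have : (1:ℕ) ≤ 2 ^ d := Nat.one_le_two_pow
      omega
    omega
  calc ((2 ^ c : ℕ) : ℕ∞) ≤ ((2 ^ ((2 ^ d - 1) + 1) : ℕ) : ℕ∞) := by exact_mod_cast hexp
    _ ≤ DQuot nilpotentClass γ := hD
    _ ≤ FGrowth nilpotentClass (surfaceGenSet g) (4 * n) := hF
    _ ≤ (4 : ℕ∞) * FGrowth nilpotentClass (surfaceGenSet g) (4 * n) :=
        le_mul_of_one_le_left' (by norm_num)
    _ = ((4 : ℕ) : ℕ∞) * FGrowth nilpotentClass (surfaceGenSet g) ((4 : ℕ) * n) := by norm_num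
end

section
/- Let P be a class of finite groups closed under isomorphism and under taking subgroups. Let Γ be a group with finite generating set X and let Δ be a subgroup of Γ with finite generating set Y. Then there exists a natural number C ≥ 1 such that F^P_{Δ,Y}(n) ≤ F^P_{Γ,X}(C·n) for all n (inequality in ℕ∞). -/
open scoped ENat

lemma wordLenLE_one {G : Type*} [Group G] (X : Set G) : wordLenLE X 1 0 :=
  ⟨[], by simp, by simp, by simp⟩

lemma wordLenLE_mul {G : Type*} [Group G] {X : Set G} {a b : G} {m n : ℕ}
    (ha : wordLenLE X a m) (hb : wordLenLE X b n) : wordLenLE X (a * b) (m + n) := by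
  obtain ⟨w1, h1, h1', rfl⟩ := ha
  obtain ⟨w2, h2, h2', rfl⟩ := hb
  refine ⟨w1 ++ w2, by simp; omega, ?_, by simp⟩
  intro x hx
  rcases List.mem_append.1 hx with h | h
  · exact h1' x h
  · exact h2' x h

lemma wordLenLE_inv {G : Type*} [Group G] {X : Set G} {a : G} {n : ℕ}
    (ha : wordLenLE X a n) : wordLenLE X a⁻¹ n := by
  obtain ⟨w, h1, h2, rfl⟩ := ha
  refine ⟨(w.map Inv.inv).reverse, by simp [h1], ?_, ?_⟩
  · intro x hx
    simp only [List.mem_reverse, List.mem_map] at hx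
    obtain ⟨y, hy, rfl⟩ := hx
    rcases h2 y hy with h | h
    · right; simpa using h
    · left; exact h
  · rw [← List.prod_inv_reverse]

lemma wordLenLE_mono {G : Type*} [Group G] {X : Set G} {a : G} {m n : ℕ}
    (h : m ≤ n) (ha : wordLenLE X a m) : wordLenLE X a n := by
  obtain ⟨w, h1, h2, rfl⟩ := ha
  exact ⟨w, h1.trans h, h2, rfl⟩

lemma exists_wordLenLE {G : Type*} [Group G] {X : Set G} (hXgen : Subgroup.closure X = ⊤)
    (g : G) : ∃ n, wordLenLE X g n := by
  have hg : g ∈ Subgroup.closure X := hXgen ▸ Subgroup.mem_top g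
  induction hg using Subgroup.closure_induction with
  | mem x hx => exact ⟨1, [x], by simp, by intro y hy; simp at hy; subst hy; exact Or.inl hx, by simp⟩
  | one => exact ⟨0, wordLenLE_one X⟩
  | mul a b _ _ ha hb =>
      obtain ⟨m, hm⟩ := ha; obtain ⟨n, hn⟩ := hb
      exact ⟨m + n, wordLenLE_mul hm hn⟩
  | inv a _ ha => obtain ⟨m, hm⟩ := ha; exact ⟨m, wordLenLE_inv hm⟩

lemma DQuot_subgroup_le {G : Type*} [Group G] (P : GrpCat.{0} → Prop)
    (hsub : ∀ (Q : GrpCat.{0}) (H : Subgroup ↥Q), P Q → P (GrpCat.of ↥H))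
    (Δ : Subgroup G) (δ : ↥Δ) : DQuot P δ ≤ DQuot P (δ : G) := by
  apply le_sInf
  rintro c ⟨Q, φ, hfin, hP, hsurj, hne, rfl⟩
  set f := φ.comp Δ.subtype with hf
  have key : DQuot P δ ≤ (Nat.card ↥f.range : ℕ∞) := by
    apply sInf_le
    refine ⟨GrpCat.of ↥f.range, f.rangeRestrict, ?_, hsub Q f.range hP, f.rangeRestrict_surjective, ?_, rfl⟩
    · exact Subtype.finite
    · intro h
      apply hne
      have := congrArg Subtype.val h
      simpa [f] using this
  refine key.trans ?_
  exact_mod_cast Nat.card_le_card_of_injective _ f.range.subtype_injective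

theorem stmt6 {G : Type*} [Group G] (P : GrpCat.{0} → Prop)
    (hiso : ∀ Q R : GrpCat.{0}, (↥Q ≃* ↥R) → P Q → P R)
    (hsub : ∀ (Q : GrpCat.{0}) (H : Subgroup ↥Q), P Q → P (GrpCat.of ↥H))
    (X : Set G) (hXfin : X.Finite) (hXgen : Subgroup.closure X = ⊤)
    (Δ : Subgroup G) (Y : Set ↥Δ) (hYfin : Y.Finite) (hYgen : Subgroup.closure Y = ⊤) :
    ∃ C : ℕ, 1 ≤ C ∧ ∀ n : ℕ, FGrowth P Y n ≤ FGrowth P X (C * n) := by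
  -- word length of each generator of Y as element of G
  choose len hlen using exists_wordLenLE hXgen
  set C : ℕ := 1 + hYfin.toFinset.sup (fun y => len (y : G)) with hC
  have hletter : ∀ x : ↥Δ, (x ∈ Y ∨ x⁻¹ ∈ Y) → wordLenLE X (x : G) C := by
    intro x hx
    rcases hx with h | h
    · refine wordLenLE_mono ?_ (hlen _)
      have h' : len (x : G) ≤ hYfin.toFinset.sup (fun y => len (y : G)) :=
        Finset.le_sup (f := fun y : ↥Δ => len (y : G)) (hYfin.mem_toFinset.2 h)
      omega
    · have hx : wordLenLE X ((x⁻¹ : ↥Δ) : G) C := by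
        refine wordLenLE_mono ?_ (hlen _)
        have h' : len ((x⁻¹ : ↥Δ) : G) ≤ hYfin.toFinset.sup (fun y => len (y : G)) :=
          Finset.le_sup (f := fun y : ↥Δ => len (y : G)) (hYfin.mem_toFinset.2 h)
        omega
      have h2 := wordLenLE_inv hx
      simpa using h2
  refine ⟨C, by omega, fun n => ?_⟩
  have hword : ∀ (δ : ↥Δ), wordLenLE Y δ n → wordLenLE X (δ : G) (C * n) := by
    rintro δ ⟨w, hw1, hw2, rfl⟩
    have : wordLenLE X ((w.prod : ↥Δ) : G) (C * w.length) := by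
      clear hw1
      induction w with
      | nil => simpa using wordLenLE_one X
      | cons a t ih =>
          have ha := hletter a (hw2 a (List.mem_cons_self))
          have ht := ih (fun x hx => hw2 x (List.mem_cons_of_mem a hx))
          have := wordLenLE_mul ha ht
          simpa [Nat.mul_succ, Nat.succ_mul, Nat.add_comm] using this
    exact wordLenLE_mono (Nat.mul_le_mul_left C hw1) this
  refine iSup_le fun δ => iSup_le fun hδ => iSup_le fun hw => ?_
  have h1 : (δ : G) ≠ 1 := by
    simpa [ne_eq, OneMemClass.coe_eq_one] using hδ
  calc DQuot P δ ≤ DQuot P (δ : G) := DQuot_subgroup_le P hsub Δ δ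
    _ ≤ _ := by
        refine le_trans ?_ (le_iSup _ (δ : G))
        refine le_trans ?_ (le_iSup _ h1)
        exact le_iSup (fun _ : wordLenLE X (δ : G) (C * n) => DQuot P (δ : G)) (hword δ hw)
end

section
/- Let F₂ be the free group on the two-element set {x, y}. Then F^{nil}_{F₂,{x,y}}(n) ≽ 2^{√n}: there exists a natural number M ≥ 1 such that 2^{⌊√n⌋} ≤ M · F^{nil}_{F₂,{x,y}}(M·n) for all n ≥ 1 (inequality in ℕ∞). -/
open scoped ENat

namespace RFG

open FreeGroup List
open scoped commutatorElement

abbrev Letter := Bool × Bool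

abbrev R (a b : Letter) : Prop := ¬(a.1 = b.1 ∧ a.2 = !b.2)

lemma reduce_eq_self : ∀ {L : List Letter}, L.Chain' R → FreeGroup.reduce L = L := by
  intro L h
  induction L with
  | nil => rfl
  | cons x xs ih =>
    rw [FreeGroup.reduce.cons, ih h.tail]
    cases xs with
    | nil => rfl
    | cons y t =>
      simp only
      rw [if_neg]
      exact (List.isChain_cons_cons.mp h).1

structure GoodW (L : List Letter) : Prop where
  chain : L.Chain' R
  hd : ∃ M, L = (true, true) :: M
  lst : ∃ M, L = M ++ [(true, false)]

lemma GoodW.head? {L : List Letter} (h : GoodW L) : L.head? = some (true, true) := by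
  obtain ⟨M, rfl⟩ := h.hd; rfl

lemma GoodW.getLast? {L : List Letter} (h : GoodW L) : L.getLast? = some (true, false) := by
  obtain ⟨M, rfl⟩ := h.lst; simp

lemma GoodW.invRev {L : List Letter} (h : GoodW L) : GoodW (FreeGroup.invRev L) := by
  constructor
  · unfold FreeGroup.invRev
    rw [List.Chain', List.isChain_reverse, List.isChain_map]
    have key : ∀ a b : Letter, R a b → R (b.1, !b.2) (a.1, !a.2) := by decide
    exact h.chain.imp fun a b hab => key a b hab
  · obtain ⟨M, rfl⟩ := h.lst
    exact ⟨(M.map fun g : Letter => (g.1, !g.2)).reverse, by simp [FreeGroup.invRev]⟩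
  · obtain ⟨M, rfl⟩ := h.hd
    exact ⟨(M.map fun g : Letter => (g.1, !g.2)).reverse, by simp [FreeGroup.invRev]⟩

/-- join two blocks with a y-letter in between -/
def J (s : Bool) (A B : List Letter) : List Letter := A ++ (false, s) :: B

lemma GoodW.join {A B : List Letter} (s : Bool) (hA : GoodW A) (hB : GoodW B) :
    GoodW (J s A B) := by
  constructor
  · refine List.IsChain.append hA.chain ?_ ?_
    · rw [List.isChain_cons]
      exact ⟨fun y hy => by rw [hB.head?] at hy; cases hy; simp [R], hB.chain⟩
    · intro x hx y hy
      rw [hA.getLast?] at hx; cases hx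
      simp only [List.head?_cons] at hy; cases hy
      simp [R]
  · obtain ⟨M, rfl⟩ := hA.hd
    exact ⟨M ++ (false, s) :: B, by simp [J]⟩
  · obtain ⟨M, rfl⟩ := hB.lst
    exact ⟨A ++ (false, s) :: M, by simp [J]⟩

/-- conjugate by x, with a trailing y⁻¹: x ∙ A ∙ y⁻¹ ∙ x⁻¹ -/
def C (A : List Letter) : List Letter := (true, true) :: (A ++ [(false, false), (true, false)])

lemma GoodW.conj {A : List Letter} (hA : GoodW A) : GoodW (C A) := by
  constructor
  · rw [C, List.Chain', List.isChain_cons]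
    constructor
    · intro y hy
      obtain ⟨M, rfl⟩ := hA.hd
      simp only [List.cons_append, List.head?_cons] at hy
      cases hy; simp [R]
    · refine List.IsChain.append hA.chain (by simp [R]) ?_
      intro x hx y hy
      rw [hA.getLast?] at hx; cases hx
      simp only [List.head?_cons] at hy; cases hy
      simp [R]
  · exact ⟨A ++ [(false, false), (true, false)], rfl⟩
  · exact ⟨(true, true) :: (A ++ [(false, false)]), by simp [C]⟩

def W : ℕ → List Letter
  | 0 => [(true, true), (false, true), (true, false)]
  | k + 1 =>
    C (J true (W k) (J false (W k) (J true (FreeGroup.invRev (W k)) (FreeGroup.invRev (W k)))))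

lemma goodW : ∀ k, GoodW (W k) := by
  intro k
  induction k with
  | zero =>
    exact ⟨by simp [W, R, List.Chain'], ⟨_, rfl⟩, ⟨[(true, true), (false, true)], rfl⟩⟩
  | succ k ih =>
    exact ((ih.join true (ih.join false (ih.invRev.join true ih.invRev))).conj)

lemma goodW_succ (k : ℕ) : W (k + 1) =
    C (J true (W k) (J false (W k) (J true (FreeGroup.invRev (W k)) (FreeGroup.invRev (W k))))) := rfl


noncomputable section

abbrev FB := FreeGroup Bool

def x : FB := FreeGroup.of true
def y : FB := FreeGroup.of false

lemma mk_J (s : Bool) (A B : List Letter) :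
    FreeGroup.mk (J s A B) = FreeGroup.mk A * FreeGroup.mk [(false, s)] * FreeGroup.mk B := by
  rw [FreeGroup.mul_mk, FreeGroup.mul_mk]
  simp [J]

lemma mk_C (A : List Letter) :
    FreeGroup.mk (C A) = x * FreeGroup.mk A * y⁻¹ * x⁻¹ := by
  have hx : x = FreeGroup.mk [(true, true)] := rfl
  have hy : y = FreeGroup.mk [(false, true)] := rfl
  rw [hx, hy, FreeGroup.inv_mk, FreeGroup.inv_mk]
  rw [FreeGroup.mul_mk, FreeGroup.mul_mk, FreeGroup.mul_mk]
  simp [C, FreeGroup.invRev]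

lemma mkW_succ (k : ℕ) :
    FreeGroup.mk (W (k + 1)) = x * ⁅FreeGroup.mk (W k), y * FreeGroup.mk (W k) * y⁻¹⁆ * x⁻¹ := by
  have hy : y = FreeGroup.mk [(false, true)] := rfl
  have hyi : y⁻¹ = FreeGroup.mk [(false, false)] := by
    rw [hy, FreeGroup.inv_mk]; simp [FreeGroup.invRev]
  rw [goodW_succ, mk_C, mk_J, mk_J, mk_J, commutatorElement_def]
  rw [← FreeGroup.inv_mk, ← hy, ← hyi]
  group

lemma w_ne_one (k : ℕ) : FreeGroup.mk (W k) ≠ 1 := by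
  have g := goodW k
  have ht : (FreeGroup.mk (W k)).toWord = W k := by
    rw [FreeGroup.toWord_mk, reduce_eq_self g.chain]
  intro h
  rw [h, FreeGroup.toWord_one] at ht
  obtain ⟨M, hM⟩ := g.hd
  rw [hM] at ht
  exact List.cons_ne_nil _ _ ht.symm

lemma lenW (k : ℕ) : (W k).length + 2 ≤ 5 * 4 ^ k := by
  induction k with
  | zero => simp [W]
  | succ k ih =>
    have h4 : (4:ℕ) ^ (k + 1) = 4 * 4 ^ k := by ring
    have hlen : (W (k + 1)).length = 4 * (W k).length + 6 := by
      rw [goodW_succ]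
      simp [C, J, FreeGroup.invRev]
      ring
    rw [hlen, h4]
    omega


section LCS

variable {G : Type*} [Group G]

lemma comm_comm_le_of_rotate {A B C N : Subgroup G} [N.Normal]
    (h1 : ⁅⁅B, C⁆, A⁆ ≤ N) (h2 : ⁅⁅C, A⁆, B⁆ ≤ N) : ⁅⁅A, B⁆, C⁆ ≤ N := by
  have key : ∀ X : Subgroup G, X ≤ N ↔ Subgroup.map (QuotientGroup.mk' N) X = ⊥ := by
    intro X
    rw [Subgroup.map_eq_bot_iff, QuotientGroup.ker_mk']
  rw [key] at h1 h2 ⊢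
  rw [Subgroup.map_commutator, Subgroup.map_commutator] at h1 h2 ⊢
  exact Subgroup.commutator_commutator_eq_bot_of_rotate h1 h2

lemma lcs_succ_eq (n : ℕ) :
    Subgroup.lowerCentralSeries (⊤ : Subgroup G) (n + 1) = ⁅Subgroup.lowerCentralSeries (⊤ : Subgroup G) n, ⊤⁆ := rfl

lemma lcs_comm (m n : ℕ) :
    ⁅Subgroup.lowerCentralSeries (⊤ : Subgroup G) m, Subgroup.lowerCentralSeries (⊤ : Subgroup G) n⁆ ≤ Subgroup.lowerCentralSeries (⊤ : Subgroup G) (m + n + 1) := by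
  induction n generalizing m with
  | zero =>
    rw [lowerCentralSeries_zero]
    exact le_of_eq (lcs_succ_eq m).symm
  | succ n ih =>
    rw [lcs_succ_eq n, Subgroup.commutator_comm]
    have h1 : ⁅⁅(⊤ : Subgroup G), Subgroup.lowerCentralSeries (⊤ : Subgroup G) m⁆, Subgroup.lowerCentralSeries (⊤ : Subgroup G) n⁆ ≤
        Subgroup.lowerCentralSeries (⊤ : Subgroup G) (m + (n + 1) + 1) := by
      rw [Subgroup.commutator_comm (⊤ : Subgroup G) (Subgroup.lowerCentralSeries (⊤ : Subgroup G) m), ← lcs_succ_eq m]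
      have := ih (m + 1)
      have he : m + 1 + n + 1 = m + (n + 1) + 1 := by omega
      rwa [he] at this
    have h2 : ⁅⁅Subgroup.lowerCentralSeries (⊤ : Subgroup G) m, Subgroup.lowerCentralSeries (⊤ : Subgroup G) n⁆, (⊤ : Subgroup G)⁆ ≤
        Subgroup.lowerCentralSeries (⊤ : Subgroup G) (m + (n + 1) + 1) := by
      calc ⁅⁅Subgroup.lowerCentralSeries (⊤ : Subgroup G) m, Subgroup.lowerCentralSeries (⊤ : Subgroup G) n⁆, (⊤ : Subgroup G)⁆
          ≤ ⁅Subgroup.lowerCentralSeries (⊤ : Subgroup G) (m + n + 1), (⊤ : Subgroup G)⁆ :=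
            Subgroup.commutator_mono (ih m) le_rfl
        _ = Subgroup.lowerCentralSeries (⊤ : Subgroup G) (m + n + 1 + 1) := (lcs_succ_eq _).symm
        _ = Subgroup.lowerCentralSeries (⊤ : Subgroup G) (m + (n + 1) + 1) := by ring_nf
    exact comm_comm_le_of_rotate h1 h2

end LCS

section Card

variable {Q : Type*} [Group Q]

lemma two_mul_card_le [Finite Q] {H K : Subgroup Q} (h : H < K) :
    2 * Nat.card H ≤ Nat.card K := by
  obtain ⟨c, hc⟩ := Subgroup.card_dvd_of_le h.le
  have hH : 0 < Nat.card H := Nat.card_pos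
  have hK : 0 < Nat.card K := Nat.card_pos
  have hc1 : c ≠ 1 := by
    rintro rfl
    rw [mul_one] at hc
    exact h.ne (Subgroup.eq_of_le_of_card_ge h.le hc.le)
  have hc0 : c ≠ 0 := by rintro rfl; omega
  have : 2 ≤ c := by omega
  calc 2 * Nat.card H ≤ Nat.card H * c := by nlinarith
    _ = Nat.card K := hc.symm

lemma card_of_lcs_ne_bot [Finite Q] (hQ : Group.IsNilpotent Q) (m : ℕ)
    (h : Subgroup.lowerCentralSeries (⊤ : Subgroup Q) m ≠ ⊥) : 2 ^ (m + 1) ≤ Nat.card Q := by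
  have hstrict : ∀ i, i ≤ m → Subgroup.lowerCentralSeries (⊤ : Subgroup Q) (i + 1) < Subgroup.lowerCentralSeries (⊤ : Subgroup Q) i := by
    intro i him
    refine lt_of_le_of_ne (lowerCentralSeries_antitone ⊤ (Nat.le_succ i)) ?_
    intro heq
    have hconst : ∀ j, i ≤ j → Subgroup.lowerCentralSeries (⊤ : Subgroup Q) j = Subgroup.lowerCentralSeries (⊤ : Subgroup Q) i := by
      intro j hij
      induction j, hij using Nat.le_induction with
      | base => rfl
      | succ j hij ihj => rw [lcs_succ_eq j, ihj, ← lcs_succ_eq i, heq]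
    obtain ⟨n, hn⟩ := nilpotent_iff_lowerCentralSeries.mp hQ
    have hbot : Subgroup.lowerCentralSeries (⊤ : Subgroup Q) i = ⊥ := by
      rw [← hconst (max n i) (le_max_right n i)]
      have := lowerCentralSeries_antitone (⊤ : Subgroup Q) (le_max_left n i)
      rw [hn] at this
      exact le_bot_iff.mp this
    apply h
    have := lowerCentralSeries_antitone (⊤ : Subgroup Q) him
    rw [hbot] at this
    exact le_bot_iff.mp this
  have hchain : ∀ d, d ≤ m + 1 → 2 ^ d ≤ Nat.card (Subgroup.lowerCentralSeries (⊤ : Subgroup Q) (m + 1 - d)) := by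
    intro d
    induction d with
    | zero => intro _; simpa using Nat.one_le_iff_ne_zero.mpr Nat.card_pos.ne'
    | succ d ihd =>
      intro hd
      have h1 := ihd (by omega)
      have hlt := hstrict (m - d) (by omega)
      have e1 : m + 1 - (d + 1) = m - d := by omega
      have e2 : m + 1 - d = m - d + 1 := by omega
      rw [e1]
      calc 2 ^ (d + 1) = 2 * 2 ^ d := by ring
        _ ≤ 2 * Nat.card (Subgroup.lowerCentralSeries (⊤ : Subgroup Q) (m + 1 - d)) := by omega
        _ = 2 * Nat.card (Subgroup.lowerCentralSeries (⊤ : Subgroup Q) (m - d + 1)) := by rw [e2]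
        _ ≤ Nat.card (Subgroup.lowerCentralSeries (⊤ : Subgroup Q) (m - d)) := two_mul_card_le hlt
  have hfin := hchain (m + 1) le_rfl
  have e : m + 1 - (m + 1) = 0 := by omega
  rw [e, lowerCentralSeries_zero, Subgroup.card_top] at hfin
  exact hfin

end Card

/-- membership of `W k` in the lower central series -/
lemma w_mem (k : ℕ) : FreeGroup.mk (W k) ∈ Subgroup.lowerCentralSeries (⊤ : Subgroup FB) (2 ^ k - 1) := by
  induction k with
  | zero => simp [lowerCentralSeries_zero]
  | succ k ih =>
    rw [mkW_succ]
    set m : ℕ := 2 ^ k - 1 with hm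
    have hconj : y * FreeGroup.mk (W k) * y⁻¹ ∈ Subgroup.lowerCentralSeries (⊤ : Subgroup FB) m :=
      (Subgroup.lowerCentralSeries_normal ⊤ m).conj_mem _ ih y
    have hcomm : ⁅FreeGroup.mk (W k), y * FreeGroup.mk (W k) * y⁻¹⁆ ∈
        Subgroup.lowerCentralSeries (⊤ : Subgroup FB) (m + m + 1) :=
      lcs_comm m m (Subgroup.commutator_mem_commutator ih hconj)
    have he : m + m + 1 = 2 ^ (k + 1) - 1 := by
      have : 1 ≤ 2 ^ k := Nat.one_le_two_pow
      rw [hm]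
      rw [pow_succ]
      omega
    rw [he] at hcomm
    exact (Subgroup.lowerCentralSeries_normal ⊤ _).conj_mem _ hcomm x

lemma prod_map_mk (L : List Letter) :
    (L.map fun p => FreeGroup.mk [p]).prod = FreeGroup.mk L := by
  induction L with
  | nil => simp [FreeGroup.one_eq_mk]
  | cons p t ih =>
    rw [List.map_cons, List.prod_cons, ih, FreeGroup.mul_mk]
    simp

lemma word_len (k n : ℕ) (hn : (W k).length ≤ n) :
    wordLenLE (Set.range (FreeGroup.of : Bool → FreeGroup Bool)) (FreeGroup.mk (W k)) n := by
  refine ⟨(W k).map fun p => FreeGroup.mk [p], by simpa using hn, ?_, prod_map_mk _⟩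
  rintro g hg
  simp only [List.mem_map] at hg
  obtain ⟨⟨a, b⟩, _, rfl⟩ := hg
  cases b
  · right
    have hinv : (FreeGroup.mk [(a, false)])⁻¹ = FreeGroup.of a := by
      rw [FreeGroup.inv_mk]
      rfl
    rw [hinv]
    exact ⟨a, rfl⟩
  · left
    exact ⟨a, rfl⟩

lemma dquot_ge (k : ℕ) :
    ((2 ^ 2 ^ k : ℕ) : ℕ∞) ≤ DQuot nilpotentClass (FreeGroup.mk (W k)) := by
  apply le_sInf
  rintro c ⟨Q, φ, hfin, hnil, hsurj, hne, rfl⟩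
  have hmem : φ (FreeGroup.mk (W k)) ∈ Subgroup.lowerCentralSeries (⊤ : Subgroup ↥Q) (2 ^ k - 1) :=
    lowerCentralSeries.map φ _ ⟨_, w_mem k, rfl⟩
  have hbot : Subgroup.lowerCentralSeries (⊤ : Subgroup ↥Q) (2 ^ k - 1) ≠ ⊥ := by
    intro h
    rw [h, Subgroup.mem_bot] at hmem
    exact hne hmem
  haveI := hfin
  have hcard := card_of_lcs_ne_bot hnil _ hbot
  have he : 2 ^ k - 1 + 1 = 2 ^ k := by
    have : 1 ≤ 2 ^ k := Nat.one_le_two_pow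
    omega
  rw [he] at hcard
  exact Nat.cast_le.mpr hcard

lemma dquot_le_fgrowth {γ : FB} (h1 : γ ≠ 1) {n : ℕ}
    (h2 : wordLenLE (Set.range (FreeGroup.of : Bool → FreeGroup Bool)) γ n) :
    DQuot nilpotentClass γ ≤
      FGrowth nilpotentClass (Set.range (FreeGroup.of : Bool → FreeGroup Bool)) n :=
  le_iSup_of_le γ (le_iSup_of_le h1 (le_iSup_of_le h2 le_rfl))

end

end RFG

theorem stmt10 :
    ∃ M : ℕ, 1 ≤ M ∧ ∀ n : ℕ, 1 ≤ n →
      ((2 ^ Nat.sqrt n : ℕ) : ℕ∞) ≤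
        (M : ℕ∞) * FGrowth nilpotentClass
          (Set.range (FreeGroup.of : Bool → FreeGroup Bool)) (M * n) := by
  refine ⟨20, by norm_num, ?_⟩
  intro n hn
  set s := Nat.sqrt n with hs
  have hs1 : 1 ≤ s := Nat.sqrt_pos.mpr hn
  set k := Nat.clog 2 s with hk
  have hsk : s ≤ 2 ^ k := Nat.le_pow_clog one_lt_two s
  have hk2 : 2 ^ k ≤ 2 * s := by
    rcases eq_or_lt_of_le hs1 with h | h
    · rw [hk, ← h, Nat.clog_one_right]
      norm_num
    · have hpred : 2 ^ (k - 1) < s := Nat.pow_pred_clog_lt_self one_lt_two h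
      have hkpos : 0 < k := Nat.clog_pos one_lt_two h
      have h2k : 2 ^ k = 2 * 2 ^ (k - 1) := by
        rw [← pow_succ']
        congr 1
        omega
      omega
  have h4 : 4 ^ k ≤ 4 * n := by
    have hss : s * s ≤ n := Nat.sqrt_le n
    calc 4 ^ k = 2 ^ k * 2 ^ k := by rw [show (4:ℕ) = 2 * 2 by norm_num, mul_pow]
      _ ≤ (2 * s) * (2 * s) := Nat.mul_le_mul hk2 hk2
      _ = 4 * (s * s) := by ring
      _ ≤ 4 * n := by omega
  have hlen : (RFG.W k).length ≤ 20 * n := by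
    have := RFG.lenW k
    omega
  have hword := RFG.word_len k (20 * n) hlen
  calc ((2 ^ s : ℕ) : ℕ∞) ≤ ((2 ^ 2 ^ k : ℕ) : ℕ∞) :=
        Nat.cast_le.mpr (Nat.pow_le_pow_right (by norm_num) hsk)
    _ ≤ DQuot nilpotentClass (FreeGroup.mk (RFG.W k)) := RFG.dquot_ge k
    _ ≤ FGrowth nilpotentClass (Set.range (FreeGroup.of : Bool → FreeGroup Bool)) (20 * n) :=
        RFG.dquot_le_fgrowth (RFG.w_ne_one k) hword
    _ ≤ ((20 : ℕ) : ℕ∞) * FGrowth nilpotentClass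
          (Set.range (FreeGroup.of : Bool → FreeGroup Bool)) (20 * n) :=
        le_mul_of_one_le_left' (by exact_mod_cast Nat.one_le_iff_ne_zero.mpr (by norm_num))
end

section
/- Let Δ = ker(φ: PSL₂(ℤ[i]) → SL₂(ℤ/2ℤ)) be the kernel of the reduction homomorphism induced by ℤ[i] → ℤ[i]/(1−i)ℤ[i] ≅ ℤ/2ℤ. Then for every finite generating set X of Δ there exists a natural number M ≥ 1 such that F^{nil}_{Δ,X}(n) ≤ M·2^{M·n} for all n ≥ 1; that is, the nilpotent residual finiteness growth of Δ satisfies F^{nil}_{Δ,X}(n) ≼ 2^n. -/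
open scoped ENat

open Matrix

abbrev SL2 (R : Type*) [CommRing R] := Matrix.SpecialLinearGroup (Fin 2) R

instance : Fact (Even 2) := ⟨⟨1, rfl⟩⟩

/-- The subgroup `{±1}` of `SL₂(R)`. -/
def pmOne (R : Type*) [CommRing R] : Subgroup (SL2 R) := Subgroup.zpowers (-1)

lemma neg_one_comm {R : Type*} [CommRing R] (g : SL2 R) : g * (-1) = (-1) * g := by
  apply Subtype.ext; simp

instance pmOne_normal (R : Type*) [CommRing R] : (pmOne R).Normal := by
  constructor
  intro x hx g
  obtain ⟨k, rfl⟩ := Subgroup.mem_zpowers_iff.mp hx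
  have hc : Commute g (-1 : SL2 R) := neg_one_comm g
  have hck : g * (-1 : SL2 R) ^ k = (-1 : SL2 R) ^ k * g := (hc.zpow_right k).eq
  rw [hck, mul_inv_cancel_right]
  exact hx

/-- `PSL₂(R) = SL₂(R)/{±1}`. -/
abbrev PSL2 (R : Type*) [CommRing R] := SL2 R ⧸ pmOne R

/-- The ring homomorphism `ℤ[i] → ℤ[i]/(1-i)ℤ[i] ≅ ℤ/2ℤ`, `a + bi ↦ a + b mod 2`. -/
def gaussToZMod2 : GaussianInt →+* ZMod 2 where
  toFun z := (z.re : ZMod 2) + (z.im : ZMod 2)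
  map_one' := by simp
  map_zero' := by simp
  map_mul' z w := by
    have h : ((z * w).re + (z * w).im : ℤ) =
        (z.re + z.im) * (w.re + w.im) - 2 * (z.im * w.im) := by
      simp [Zsqrtd.re_mul, Zsqrtd.im_mul]; ring
    have h2 : (((z * w).re + (z * w).im : ℤ) : ZMod 2) =
        (((z.re + z.im) * (w.re + w.im) - 2 * (z.im * w.im) : ℤ) : ZMod 2) := by rw [h]
    push_cast at h2
    rw [show ((2 : ZMod 2) = 0) by decide] at h2
    push_cast
    linear_combination h2
  map_add' z w := by
    simp [Zsqrtd.re_add, Zsqrtd.im_add]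
    ring

/-- Entrywise reduction `SL₂(ℤ[i]) → SL₂(ℤ/2ℤ)`. -/
def redSL : SL2 GaussianInt →* SL2 (ZMod 2) :=
  Matrix.SpecialLinearGroup.map gaussToZMod2

lemma redSL_neg_one : redSL (-1) = 1 := by
  apply Subtype.ext
  ext i j
  fin_cases i <;> fin_cases j <;>
    simp [redSL, Matrix.SpecialLinearGroup.map, gaussToZMod2] <;> decide

/-- The homomorphism `φ : PSL₂(ℤ[i]) → SL₂(ℤ/2ℤ)` induced by
`ℤ[i] → ℤ[i]/(1-i)ℤ[i] ≅ ℤ/2ℤ`. -/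
def redPSL : PSL2 GaussianInt →* SL2 (ZMod 2) :=
  QuotientGroup.lift (pmOne GaussianInt) redSL (by
    intro x hx
    obtain ⟨k, rfl⟩ := Subgroup.mem_zpowers_iff.mp hx
    rw [MonoidHom.mem_ker, map_zpow, redSL_neg_one, _root_.one_zpow])

namespace Stmt11Aux

noncomputable section

/-! ### Arithmetic helpers -/

lemma nat_pow_helper {a b : ℕ} (ha : 1 ≤ a) :
    ∀ n, 1 ≤ n → a ^ n + b ≤ (a + b) ^ n := by
  intro n hn
  induction n, hn using Nat.le_induction with
  | base => simp
  | succ m hm ih =>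
    have h1 : 1 ≤ a ^ m := Nat.one_le_pow _ _ ha
    have h2 : b ≤ a * b := Nat.le_mul_of_pos_left b (by omega)
    calc a ^ (m + 1) + b ≤ (a ^ m + b) * (a + b) := by rw [pow_succ]; nlinarith
      _ ≤ (a + b) ^ m * (a + b) := Nat.mul_le_mul_right _ ih
      _ = (a + b) ^ (m + 1) := (pow_succ _ _).symm

lemma two_pow_big {B n : ℕ} (hB : 1 ≤ B) (hn : 1 ≤ n) :
    (4 * B) ^ n + 1 < 2 ^ ((B + 3) * n) := by
  have hbase : 4 * B + 8 ≤ 2 ^ (B + 3) := by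
    have := Nat.lt_two_pow_self (n := B)
    calc 4 * B + 8 ≤ 8 * (B + 1) := by omega
      _ ≤ 8 * 2 ^ B := by omega
      _ = 2 ^ (B + 3) := by ring
  have h1 : (4 * B + 8) ^ n ≤ 2 ^ ((B + 3) * n) := by
    rw [pow_mul]
    exact Nat.pow_le_pow_left hbase n
  have h2 : (4 * B) ^ n + 8 ≤ (4 * B + 8) ^ n := nat_pow_helper (by omega) n hn
  omega

/-! ### Gaussian integer helpers -/

abbrev ii : GaussianInt := ⟨1, 1⟩

lemma ii_dvd_of_gauss_eq {z w : GaussianInt} (h : gaussToZMod2 z = gaussToZMod2 w) :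
    ii ∣ z - w := by
  have h0 : gaussToZMod2 (z - w) = 0 := by rw [map_sub, h, sub_self]
  have h1 : (((z - w).re + (z - w).im : ℤ) : ZMod 2) = 0 := by
    have : ((z - w).re : ZMod 2) + ((z - w).im : ZMod 2) = 0 := h0
    push_cast
    exact this
  have h2 : (2 : ℤ) ∣ (z - w).re + (z - w).im := by
    exact_mod_cast (ZMod.intCast_zmod_eq_zero_iff_dvd _ 2).mp h1
  obtain ⟨a, ha⟩ := h2
  refine ⟨⟨a, a - (z - w).re⟩, ?_⟩
  simp only [Zsqrtd.re_sub, Zsqrtd.im_sub] at ha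
  have hre : (z - w).re = (ii * ⟨a, a - (z - w).re⟩).re := by
    simp only [Zsqrtd.re_mul, Zsqrtd.re_sub, Zsqrtd.im_sub]
    ring
  have him : (z - w).im = (ii * ⟨a, a - (z - w).re⟩).im := by
    simp only [Zsqrtd.im_mul, Zsqrtd.re_sub, Zsqrtd.im_sub]
    omega
  exact Zsqrtd.ext hre him

lemma two_dvd_ii_sq : (2 : GaussianInt) ∣ ii * ii := by
  refine ⟨⟨0, 1⟩, ?_⟩
  apply Zsqrtd.ext <;> simp [Zsqrtd.re_mul, Zsqrtd.im_mul]

lemma cast_two_pow (k : ℕ) : ((2 ^ k : ℤ) : GaussianInt) = (2 : GaussianInt) ^ k := by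
  push_cast
  ring

/-! ### Matrix congruence lemmas -/

open Matrix

lemma matrix_sq {u : Matrix (Fin 2) (Fin 2) GaussianInt} {c e : GaussianInt}
    (hcc : e ∣ c * c) (h2c : e ∣ 2 * c) (h : ∀ i j, c ∣ (u - 1) i j) :
    ∀ i j, e ∣ (u * u - 1) i j := by
  have key : u * u - 1 = (u - 1) * (u - 1) + ((u - 1) + (u - 1)) := by noncomm_ring
  intro i j
  rw [key]
  simp only [Matrix.add_apply, Matrix.mul_apply, Fin.sum_univ_two]
  refine dvd_add (dvd_add ?_ ?_) ?_
  · exact hcc.trans (mul_dvd_mul (h i 0) (h 0 j))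
  · exact hcc.trans (mul_dvd_mul (h i 1) (h 1 j))
  · rw [← two_mul]
    exact h2c.trans (mul_dvd_mul_left 2 (h i j))

lemma pow_entries {u : Matrix (Fin 2) (Fin 2) GaussianInt}
    (h : ∀ i j, ii ∣ (u - 1) i j) :
    ∀ k, 1 ≤ k → ∀ i j : Fin 2, (2 : GaussianInt) ^ k ∣ (u ^ (2 ^ k : ℕ) - 1) i j := by
  intro k hk
  induction k, hk using Nat.le_induction with
  | base =>
    have hu : u ^ (2 ^ 1 : ℕ) = u * u := by norm_num [pow_two]
    rw [hu, pow_one]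
    exact matrix_sq two_dvd_ii_sq (dvd_mul_right 2 ii) h
  | succ m hm ih =>
    have hu : u ^ (2 ^ (m+1) : ℕ) = (u ^ (2 ^ m : ℕ)) * (u ^ (2 ^ m : ℕ)) := by
      rw [← pow_add]
      congr 1
      omega
    rw [hu]
    refine matrix_sq ?_ ?_ ih
    · rw [← pow_add]
      exact pow_dvd_pow 2 (by omega)
    · exact dvd_of_eq (by ring)

end
end Stmt11Aux

namespace Stmt11Aux
noncomputable section
open Matrix

/-! ### The quotient rings `ℤ[i]/(2^k)` and reduction maps -/

def Ik (k : ℕ) : Ideal GaussianInt := Ideal.span {(2 : GaussianInt) ^ k}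

abbrev Rk (k : ℕ) := GaussianInt ⧸ Ik k

def qk (k : ℕ) : GaussianInt →+* Rk k := Ideal.Quotient.mk (Ik k)

def slk (k : ℕ) : SL2 GaussianInt →* SL2 (Rk k) := SpecialLinearGroup.map (qk k)

lemma slk_apply (k : ℕ) (g : SL2 GaussianInt) (i j : Fin 2) :
    (slk k g).1 i j = qk k (g.1 i j) := rfl

lemma slk_eq_iff (k : ℕ) (g h : SL2 GaussianInt) :
    slk k g = slk k h ↔ ∀ i j : Fin 2, (2 : GaussianInt) ^ k ∣ (g.1 i j - h.1 i j) := by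
  constructor
  · intro H i j
    have h1 : qk k (g.1 i j) = qk k (h.1 i j) := by
      rw [← slk_apply, ← slk_apply, H]
    exact Ideal.mem_span_singleton.mp (Ideal.Quotient.eq.mp h1)
  · intro H
    apply Subtype.ext
    ext i j
    show qk k (g.1 i j) = qk k (h.1 i j)
    exact Ideal.Quotient.eq.mpr (Ideal.mem_span_singleton.mpr (H i j))

lemma slk_neg_one (k : ℕ) : slk k (-1) = -1 := by
  apply Subtype.ext
  ext i j
  rw [slk_apply]
  rw [SpecialLinearGroup.coe_neg, SpecialLinearGroup.coe_neg,
    Matrix.SpecialLinearGroup.coe_one, Matrix.SpecialLinearGroup.coe_one]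
  by_cases h : i = j <;>
    simp [Matrix.one_apply, Matrix.neg_apply, h]

def pslk (k : ℕ) : SL2 (Rk k) →* PSL2 (Rk k) := QuotientGroup.mk' (pmOne (Rk k))

def Φk (k : ℕ) : PSL2 GaussianInt →* PSL2 (Rk k) :=
  QuotientGroup.lift (pmOne GaussianInt) ((pslk k).comp (slk k)) (by
    intro x hx
    obtain ⟨m, rfl⟩ := Subgroup.mem_zpowers_iff.mp hx
    rw [MonoidHom.mem_ker, MonoidHom.comp_apply, map_zpow, slk_neg_one]
    rw [pslk, QuotientGroup.mk'_apply]
    exact (QuotientGroup.eq_one_iff _).mpr (zpow_mem (Subgroup.mem_zpowers _) m))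

lemma Φk_mk (k : ℕ) (g : SL2 GaussianInt) :
    Φk k (QuotientGroup.mk g) = QuotientGroup.mk (slk k g) :=
  QuotientGroup.lift_mk' _ _ g

lemma mem_pmOne_iff {R : Type} [CommRing R] (x : SL2 R) :
    x ∈ pmOne R ↔ x = 1 ∨ x = -1 := by
  constructor
  · intro hx
    obtain ⟨m, rfl⟩ := Subgroup.mem_zpowers_iff.mp hx
    have hsq : (-1 : SL2 R) ^ (2 : ℤ) = 1 := by
      rw [show (2:ℤ) = 1 + 1 by norm_num, _root_.zpow_add, zpow_one]
      apply Subtype.ext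
      rw [Matrix.SpecialLinearGroup.coe_mul, SpecialLinearGroup.coe_neg, Matrix.SpecialLinearGroup.coe_one]
      simp
    obtain ⟨q, r, hr, rfl⟩ : ∃ q r : ℤ, (r = 0 ∨ r = 1) ∧ m = 2 * q + r :=
      ⟨m / 2, m % 2, by omega, by omega⟩
    rw [_root_.zpow_add, _root_.zpow_mul, hsq, _root_.one_zpow, one_mul]
    rcases hr with rfl | rfl
    · left; exact zpow_zero _
    · right; exact zpow_one _
  · rintro (rfl | rfl)
    · exact one_mem _
    · exact Subgroup.mem_zpowers _

/-! ### The order lemma: the image of `Δ` in `PSL₂(ℤ[i]/2^k)` is a `2`-group -/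

lemma order_lemma (k : ℕ) (hk : 1 ≤ k) (γ : PSL2 GaussianInt) (hγ : redPSL γ = 1) :
    (Φk k γ) ^ (2 ^ k : ℕ) = 1 := by
  obtain ⟨g, rfl⟩ := QuotientGroup.mk_surjective γ
  have hred : redSL g = 1 := by
    rwa [redPSL, QuotientGroup.lift_mk'] at hγ
  have hentry : ∀ i j : Fin 2, ii ∣ (g.1 - 1) i j := by
    intro i j
    have h1 : gaussToZMod2 (g.1 i j) = (1 : Matrix (Fin 2) (Fin 2) (ZMod 2)) i j := by
      have h2 : (redSL g).1 i j = (1 : SL2 (ZMod 2)).1 i j := by rw [hred]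
      rw [Matrix.SpecialLinearGroup.coe_one] at h2
      exact h2
    have h3 : gaussToZMod2 (g.1 i j) =
        gaussToZMod2 ((1 : Matrix (Fin 2) (Fin 2) GaussianInt) i j) := by
      rw [h1]
      by_cases h : i = j <;> simp [Matrix.one_apply, h]
    have h4 := ii_dvd_of_gauss_eq h3
    simpa [Matrix.sub_apply] using h4
  have hdvd := pow_entries hentry k hk
  have hsl : slk k (g ^ (2 ^ k : ℕ)) = slk k 1 := by
    rw [slk_eq_iff]
    intro i j
    have h5 := hdvd i j
    simpa [Matrix.SpecialLinearGroup.coe_pow, Matrix.SpecialLinearGroup.coe_one, Matrix.sub_apply] using h5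
  have hq : ((QuotientGroup.mk g : PSL2 GaussianInt)) ^ (2 ^ k : ℕ) =
      QuotientGroup.mk (g ^ (2 ^ k : ℕ)) := by
    rw [← QuotientGroup.mk'_apply, ← QuotientGroup.mk'_apply, ← map_pow]
  rw [← map_pow, hq, Φk_mk, hsl, _root_.map_one]
  rfl

end
end Stmt11Aux

namespace Stmt11Aux
noncomputable section
open Matrix

/-! ### Entry bounds -/

def EB (g : SL2 GaussianInt) (c : ℤ) : Prop :=
  ∀ i j : Fin 2, |(g.1 i j).re| ≤ c ∧ |(g.1 i j).im| ≤ c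

lemma EB.mono {g : SL2 GaussianInt} {c c' : ℤ} (h : EB g c) (hc : c ≤ c') : EB g c' :=
  fun i j => ⟨(h i j).1.trans hc, (h i j).2.trans hc⟩

lemma EB_one : EB 1 1 := by
  intro i j
  rw [Matrix.SpecialLinearGroup.coe_one]
  by_cases h : i = j <;> simp [Matrix.one_apply, h]

lemma gauss_mul_bound {u v : GaussianInt} {x y : ℤ} (hx : 0 ≤ x)
    (h1 : |u.re| ≤ x) (h2 : |u.im| ≤ x) (h3 : |v.re| ≤ y) (h4 : |v.im| ≤ y) :
    |(u * v).re| ≤ 2 * (x * y) ∧ |(u * v).im| ≤ 2 * (x * y) := by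
  have e1 : |u.re * v.re| ≤ x * y := by
    rw [abs_mul]; exact mul_le_mul h1 h3 (abs_nonneg _) hx
  have e2 : |u.im * v.im| ≤ x * y := by
    rw [abs_mul]; exact mul_le_mul h2 h4 (abs_nonneg _) hx
  have e3 : |u.re * v.im| ≤ x * y := by
    rw [abs_mul]; exact mul_le_mul h1 h4 (abs_nonneg _) hx
  have e4 : |u.im * v.re| ≤ x * y := by
    rw [abs_mul]; exact mul_le_mul h2 h3 (abs_nonneg _) hx
  constructor
  · have : (u * v).re = u.re * v.re - u.im * v.im := by
      rw [Zsqrtd.re_mul]; ring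
    rw [this]
    calc |u.re * v.re - u.im * v.im| ≤ |u.re * v.re| + |u.im * v.im| := abs_sub _ _
      _ ≤ 2 * (x * y) := by linarith
  · have : (u * v).im = u.re * v.im + u.im * v.re := Zsqrtd.im_mul _ _
    rw [this]
    calc |u.re * v.im + u.im * v.re| ≤ |u.re * v.im| + |u.im * v.re| := abs_add_le _ _
      _ ≤ 2 * (x * y) := by linarith

lemma EB_mul {g h : SL2 GaussianInt} {a b : ℤ} (ha : 0 ≤ a) (_hb : 0 ≤ b)
    (hg : EB g a) (hh : EB h b) : EB (g * h) (4 * (a * b)) := by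
  intro i j
  have hcoe : (g * h).1 i j = g.1 i 0 * h.1 0 j + g.1 i 1 * h.1 1 j := by
    rw [Matrix.SpecialLinearGroup.coe_mul, Matrix.mul_apply, Fin.sum_univ_two]
  have b1 := gauss_mul_bound ha (hg i 0).1 (hg i 0).2 (hh 0 j).1 (hh 0 j).2
  have b2 := gauss_mul_bound ha (hg i 1).1 (hg i 1).2 (hh 1 j).1 (hh 1 j).2
  rw [hcoe]
  constructor
  · rw [Zsqrtd.re_add]
    calc |(g.1 i 0 * h.1 0 j).re + (g.1 i 1 * h.1 1 j).re|
        ≤ |(g.1 i 0 * h.1 0 j).re| + |(g.1 i 1 * h.1 1 j).re| := abs_add_le _ _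
      _ ≤ 4 * (a * b) := by linarith [b1.1, b2.1]
  · rw [Zsqrtd.im_add]
    calc |(g.1 i 0 * h.1 0 j).im + (g.1 i 1 * h.1 1 j).im|
        ≤ |(g.1 i 0 * h.1 0 j).im| + |(g.1 i 1 * h.1 1 j).im| := abs_add_le _ _
      _ ≤ 4 * (a * b) := by linarith [b1.2, b2.2]

lemma EB_inv {g : SL2 GaussianInt} {c : ℤ} (h : EB g c) : EB g⁻¹ c := by
  have hcoe : (g⁻¹).1 = !![g.1 1 1, -g.1 0 1; -g.1 1 0, g.1 0 0] := by
    rw [Matrix.SpecialLinearGroup.coe_inv, Matrix.adjugate_fin_two]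
  intro i j
  fin_cases i <;> fin_cases j <;>
    simp [hcoe, Zsqrtd.re_neg, Zsqrtd.im_neg, abs_neg]
  · exact h 1 1
  · exact h 0 1
  · exact h 1 0
  · exact h 0 0

def natB (h : SL2 GaussianInt) : ℕ :=
  Finset.sup Finset.univ fun p : Fin 2 × Fin 2 =>
    max (h.1 p.1 p.2).re.natAbs (h.1 p.1 p.2).im.natAbs

lemma EB_natB (h : SL2 GaussianInt) : EB h (natB h) := by
  intro i j
  have h0 : max (h.1 i j).re.natAbs (h.1 i j).im.natAbs ≤ natB h :=
    Finset.le_sup (f := fun p : Fin 2 × Fin 2 =>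
      max (h.1 p.1 p.2).re.natAbs (h.1 p.1 p.2).im.natAbs) (Finset.mem_univ (i, j))
  have h1 : (h.1 i j).re.natAbs ≤ natB h := le_trans (le_max_left _ _) h0
  have h2 : (h.1 i j).im.natAbs ≤ natB h := le_trans (le_max_right _ _) h0
  constructor <;> rw [Int.abs_eq_natAbs] <;> exact_mod_cast ‹_›

end
end Stmt11Aux

namespace Stmt11Aux
noncomputable section
open Matrix

/-! ### Detection -/

lemma entry_clash {k : ℕ} {g e : SL2 GaussianInt} {C : ℤ} (hC : 0 ≤ C)
    (hEB : EB g C)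
    (he : ∀ i j : Fin 2, |(e.1 i j).re| ≤ 1 ∧ (e.1 i j).im = 0)
    (hne : g ≠ e)
    (hdvd : ∀ i j : Fin 2, (2 : GaussianInt) ^ k ∣ (g.1 i j - e.1 i j))
    (hk : C + 1 < 2 ^ k) : False := by
  have hmne : g.1 ≠ e.1 := fun h => hne (Subtype.ext h)
  have hex : ∃ i j, g.1 i j ≠ e.1 i j := by
    by_contra h
    push_neg at h
    exact hmne (Matrix.ext h)
  obtain ⟨i, j, hij⟩ := hex
  set z := g.1 i j - e.1 i j with hz
  have hz0 : z ≠ 0 := sub_ne_zero.mpr hij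
  have hdz : (2 ^ k : ℤ) ∣ z.re ∧ (2 ^ k : ℤ) ∣ z.im := by
    rw [← Zsqrtd.intCast_dvd]
    rw [cast_two_pow]
    exact hdvd i j
  obtain ⟨hre, him⟩ := hEB i j
  obtain ⟨here, heim⟩ := he i j
  have hbre : |z.re| ≤ C + 1 := by
    have h1 : z.re = (g.1 i j).re - (e.1 i j).re := Zsqrtd.re_sub _ _
    rw [h1]
    calc |(g.1 i j).re - (e.1 i j).re| ≤ |(g.1 i j).re| + |(e.1 i j).re| := abs_sub _ _
      _ ≤ C + 1 := by linarith
  have hbim : |z.im| ≤ C + 1 := by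
    have h1 : z.im = (g.1 i j).im - (e.1 i j).im := Zsqrtd.im_sub _ _
    rw [h1, heim, sub_zero]
    linarith
  have hcases : z.re ≠ 0 ∨ z.im ≠ 0 := by
    by_contra h
    push_neg at h
    exact hz0 (by apply Zsqrtd.ext <;> simp [h.1, h.2])
  rcases hcases with h | h
  · have h1 : (2 : ℤ) ^ k ≤ |z.re| :=
      Int.le_of_dvd (abs_pos.mpr h) ((dvd_abs _ _).mpr hdz.1)
    linarith
  · have h1 : (2 : ℤ) ^ k ≤ |z.im| :=
      Int.le_of_dvd (abs_pos.mpr h) ((dvd_abs _ _).mpr hdz.2)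
    linarith

lemma detect_core {k n B : ℕ} (hB : 1 ≤ B) (hn : 1 ≤ n) (hk : k = (B + 3) * n)
    (g : SL2 GaussianInt) (hEB : EB g ((4 * B : ℤ) ^ n))
    (hne : (QuotientGroup.mk g : PSL2 GaussianInt) ≠ 1) :
    Φk k (QuotientGroup.mk g) ≠ 1 := by
  intro hcon
  rw [Φk_mk] at hcon
  have hmem : slk k g ∈ pmOne (Rk k) := (QuotientGroup.eq_one_iff _).mp hcon
  have hbound : ((4 * B : ℤ)) ^ n + 1 < 2 ^ k := by
    have h0 := two_pow_big hB hn
    rw [hk]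
    exact_mod_cast h0
  have hC : (0 : ℤ) ≤ (4 * B : ℤ) ^ n := by positivity
  have hg1 : g ≠ 1 := by
    rintro rfl
    exact hne ((QuotientGroup.eq_one_iff _).mpr (one_mem _))
  have hgm1 : g ≠ -1 := by
    rintro rfl
    exact hne ((QuotientGroup.eq_one_iff _).mpr (Subgroup.mem_zpowers _))
  rcases (mem_pmOne_iff _).mp hmem with h1 | h1
  · have hd : ∀ i j : Fin 2, (2 : GaussianInt) ^ k ∣ (g.1 i j - (1 : SL2 GaussianInt).1 i j) := by
      intro i j
      exact (slk_eq_iff k g 1).mp (by rw [h1, _root_.map_one]) i j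
    refine entry_clash hC hEB (e := 1) ?_ hg1 hd hbound
    intro i j
    rw [Matrix.SpecialLinearGroup.coe_one]
    by_cases h : i = j <;> simp [Matrix.one_apply, h]
  · have hd : ∀ i j : Fin 2, (2 : GaussianInt) ^ k ∣ (g.1 i j - (-1 : SL2 GaussianInt).1 i j) := by
      intro i j
      exact (slk_eq_iff k g (-1)).mp (by rw [h1, slk_neg_one]) i j
    refine entry_clash hC hEB (e := -1) ?_ hgm1 hd hbound
    intro i j
    rw [SpecialLinearGroup.coe_neg, Matrix.SpecialLinearGroup.coe_one]
    by_cases h : i = j <;> simp [Matrix.one_apply, Matrix.neg_apply, h]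

/-! ### Lifting words to `SL₂(ℤ[i])` with entry bounds -/

lemma exists_B (X : Set ↥(MonoidHom.ker redPSL)) (hXfin : X.Finite) :
    ∃ B : ℕ, 1 ≤ B ∧ ∀ x : ↥(MonoidHom.ker redPSL), (x ∈ X ∨ x⁻¹ ∈ X) →
      ∃ h : SL2 GaussianInt, QuotientGroup.mk h = (x : PSL2 GaussianInt) ∧ EB h B := by
  classical
  set B := 1 + hXfin.toFinset.sup
    (fun x : ↥(MonoidHom.ker redPSL) => natB (Quotient.out (x : PSL2 GaussianInt))) with hBdef
  refine ⟨B, by omega, ?_⟩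
  have hmem : ∀ x : ↥(MonoidHom.ker redPSL), x ∈ X →
      ∃ h, QuotientGroup.mk h = (x : PSL2 GaussianInt) ∧ EB h B := by
    intro x hx
    refine ⟨Quotient.out (x : PSL2 GaussianInt), QuotientGroup.out_eq' _, ?_⟩
    apply (EB_natB _).mono
    have h1 : natB (Quotient.out (x : PSL2 GaussianInt)) ≤
        hXfin.toFinset.sup
          (fun x : ↥(MonoidHom.ker redPSL) => natB (Quotient.out (x : PSL2 GaussianInt))) :=
      Finset.le_sup (f := fun x : ↥(MonoidHom.ker redPSL) =>
        natB (Quotient.out (x : PSL2 GaussianInt))) (hXfin.mem_toFinset.mpr hx)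
    have h2 : natB (Quotient.out (x : PSL2 GaussianInt)) ≤ B := by omega
    exact_mod_cast h2
  intro x hx
  rcases hx with hx | hx
  · exact hmem x hx
  · obtain ⟨h, hh, hEBh⟩ := hmem _ hx
    refine ⟨h⁻¹, ?_, EB_inv hEBh⟩
    have : (QuotientGroup.mk h⁻¹ : PSL2 GaussianInt) = (QuotientGroup.mk h)⁻¹ := by
      rw [← QuotientGroup.mk'_apply, ← QuotientGroup.mk'_apply, map_inv]
    rw [this, hh]
    push_cast
    rw [inv_inv]

lemma lift_list {X : Set ↥(MonoidHom.ker redPSL)} {B : ℕ}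
    (hB : ∀ x : ↥(MonoidHom.ker redPSL), (x ∈ X ∨ x⁻¹ ∈ X) →
      ∃ h, QuotientGroup.mk h = (x : PSL2 GaussianInt) ∧ EB h B) :
    ∀ w : List ↥(MonoidHom.ker redPSL), (∀ x ∈ w, x ∈ X ∨ x⁻¹ ∈ X) →
      ∃ g : SL2 GaussianInt,
        QuotientGroup.mk g = ((w.prod : ↥(MonoidHom.ker redPSL)) : PSL2 GaussianInt) ∧
        EB g ((4 * B : ℤ) ^ w.length) := by
  intro w
  induction w with
  | nil =>
    intro _
    refine ⟨1, ?_, by simpa using EB_one⟩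
    simp
  | cons x t ih =>
    intro hall
    obtain ⟨h, hh, hEBh⟩ := hB x (hall x List.mem_cons_self)
    obtain ⟨g, hg, hEBg⟩ := ih (fun y hy => hall y (List.mem_cons_of_mem _ hy))
    refine ⟨h * g, ?_, ?_⟩
    · have hmul : (QuotientGroup.mk (h * g) : PSL2 GaussianInt) =
          QuotientGroup.mk h * QuotientGroup.mk g := by
        rw [← QuotientGroup.mk'_apply, ← QuotientGroup.mk'_apply, ← QuotientGroup.mk'_apply,
          _root_.map_mul]
      rw [hmul, hh, hg, List.prod_cons]
      push_cast
      ring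
    · have hb := EB_mul (by positivity) (by positivity) hEBh hEBg
      have heq : 4 * ((B : ℤ) * (4 * B) ^ t.length) = (4 * B : ℤ) ^ (x :: t).length := by
        rw [List.length_cons, pow_succ]
        ring
      exact heq ▸ hb

end
end Stmt11Aux

namespace Stmt11Aux
noncomputable section
open Matrix

/-! ### Finiteness and cardinality of `PSL₂(ℤ[i]/2^k)` -/

lemma Rk_surj (k : ℕ) : Function.Surjective
    (fun p : ZMod (2 ^ k) × ZMod (2 ^ k) => qk k ⟨(p.1.val : ℤ), (p.2.val : ℤ)⟩) := by
  haveI : NeZero (2 ^ k) := ⟨pow_ne_zero _ two_ne_zero⟩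
  intro q
  obtain ⟨z, rfl⟩ := Ideal.Quotient.mk_surjective q
  refine ⟨((z.re : ZMod (2 ^ k)), (z.im : ZMod (2 ^ k))), ?_⟩
  have key : ∀ t : ℤ, (2 ^ k : ℤ) ∣ (((t : ZMod (2 ^ k)).val : ℤ) - t) := by
    intro t
    have h0 : ((((t : ZMod (2 ^ k)).val : ℤ) - t : ℤ) : ZMod (2 ^ k)) = 0 := by
      push_cast
      rw [ZMod.natCast_val, ZMod.cast_id]
      ring
    have := (ZMod.intCast_zmod_eq_zero_iff_dvd _ _).mp h0
    exact_mod_cast this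
  show qk k _ = qk k z
  rw [qk, Ideal.Quotient.eq, Ik, Ideal.mem_span_singleton, ← cast_two_pow, Zsqrtd.intCast_dvd]
  constructor
  · simpa [Zsqrtd.re_sub] using key z.re
  · simpa [Zsqrtd.im_sub] using key z.im

lemma finite_Rk (k : ℕ) : Finite (Rk k) := by
  haveI : NeZero (2 ^ k) := ⟨pow_ne_zero _ two_ne_zero⟩
  exact Finite.of_surjective _ (Rk_surj k)

lemma card_Rk (k : ℕ) : Nat.card (Rk k) ≤ 2 ^ (2 * k) := by
  haveI : NeZero (2 ^ k) := ⟨pow_ne_zero _ two_ne_zero⟩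
  have h1 := Nat.card_le_card_of_surjective _ (Rk_surj k)
  have h2 : Nat.card (ZMod (2 ^ k) × ZMod (2 ^ k)) = 2 ^ (2 * k) := by
    rw [Nat.card_prod, Nat.card_zmod, ← pow_add, two_mul]
  omega

lemma finite_matrix_Rk (k : ℕ) : Finite (Matrix (Fin 2) (Fin 2) (Rk k)) := by
  haveI := finite_Rk k
  exact Finite.of_equiv _ (Matrix.of : (Fin 2 → Fin 2 → Rk k) ≃ _)

lemma finite_SL_Rk (k : ℕ) : Finite (SL2 (Rk k)) := by
  haveI := finite_matrix_Rk k
  exact Finite.of_injective (fun g : SL2 (Rk k) => g.1) Subtype.val_injective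

lemma finite_PSL_Rk (k : ℕ) : Finite (PSL2 (Rk k)) := by
  haveI := finite_SL_Rk k
  exact Quotient.finite _

lemma card_PSL_Rk (k : ℕ) : Nat.card (PSL2 (Rk k)) ≤ 2 ^ (8 * k) := by
  haveI := finite_Rk k
  haveI := finite_matrix_Rk k
  haveI := finite_SL_Rk k
  have h1 : Nat.card (PSL2 (Rk k)) ≤ Nat.card (SL2 (Rk k)) :=
    Nat.card_le_card_of_surjective _ (QuotientGroup.mk'_surjective (pmOne (Rk k)))
  have h2 : Nat.card (SL2 (Rk k)) ≤ Nat.card (Matrix (Fin 2) (Fin 2) (Rk k)) :=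
    Nat.card_le_card_of_injective _ Subtype.val_injective
  have h3 : Nat.card (Matrix (Fin 2) (Fin 2) (Rk k)) = (Nat.card (Rk k)) ^ 4 := by
    have e1 : Nat.card (Matrix (Fin 2) (Fin 2) (Rk k)) =
        Nat.card (Fin 2 → Fin 2 → Rk k) := Nat.card_congr (Matrix.of).symm
    rw [e1, Nat.card_fun, Nat.card_fun]
    simp [Nat.card_eq_fintype_card]
    ring
  have h4 : (Nat.card (Rk k)) ^ 4 ≤ (2 ^ (2 * k)) ^ 4 :=
    Nat.pow_le_pow_left (card_Rk k) 4
  have h5 : ((2 : ℕ) ^ (2 * k)) ^ 4 = 2 ^ (8 * k) := by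
    rw [← pow_mul]
    ring_nf
  omega

end
end Stmt11Aux

theorem stmt11 (X : Set ↥(MonoidHom.ker redPSL)) (hXfin : X.Finite)
    (hXgen : Subgroup.closure X = ⊤) :
    ∃ M : ℕ, 1 ≤ M ∧ ∀ n : ℕ, 1 ≤ n →
      FGrowth nilpotentClass X n ≤ ((M * 2 ^ (M * n) : ℕ) : ℕ∞) := by
  classical
  obtain ⟨B, hB1, hBlift⟩ := Stmt11Aux.exists_B X hXfin
  refine ⟨8 * (B + 3), by omega, ?_⟩
  intro n hn
  set k := (B + 3) * n with hkdef
  have hk1 : 1 ≤ k := by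
    have : 1 * 1 ≤ (B + 3) * n := Nat.mul_le_mul (by omega) hn
    omega
  haveI := Stmt11Aux.finite_Rk k
  haveI := Stmt11Aux.finite_PSL_Rk k
  set Ψ : ↥(MonoidHom.ker redPSL) →* PSL2 (Stmt11Aux.Rk k) :=
    (Stmt11Aux.Φk k).comp (MonoidHom.ker redPSL).subtype with hΨdef
  haveI : Finite ↥Ψ.range := inferInstance
  -- the supremum bound
  rw [FGrowth]
  apply iSup_le
  intro γ
  apply iSup_le
  intro hγ1
  apply iSup_le
  intro hw
  obtain ⟨w, hwlen, hwmem, hwprod⟩ := hw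
  obtain ⟨g, hg, hEB⟩ := Stmt11Aux.lift_list hBlift w hwmem
  rw [hwprod] at hg
  have hEB' : Stmt11Aux.EB g ((4 * B : ℤ) ^ n) := by
    apply hEB.mono
    have h14 : (1 : ℤ) ≤ 4 * (B : ℤ) := by exact_mod_cast (show (1:ℕ) ≤ 4 * B by omega)
    exact pow_le_pow_right₀ h14 hwlen
  have hγne : (↑γ : PSL2 GaussianInt) ≠ 1 := fun h => hγ1 (OneMemClass.coe_eq_one.mp h)
  have hdet : Stmt11Aux.Φk k (↑γ : PSL2 GaussianInt) ≠ 1 := by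
    rw [← hg]
    exact Stmt11Aux.detect_core hB1 hn hkdef g hEB' (hg ▸ hγne)
  -- the detecting quotient
  have hmem : ((Nat.card ↥Ψ.range : ℕ∞)) ∈
      {c : ℕ∞ | ∃ (Q : GrpCat.{0}) (φ : ↥(MonoidHom.ker redPSL) →* ↥Q), Finite ↥Q ∧
        nilpotentClass Q ∧ Function.Surjective φ ∧ φ γ ≠ 1 ∧ c = (Nat.card ↥Q : ℕ∞)} := by
    refine ⟨GrpCat.of ↥Ψ.range, Ψ.rangeRestrict, ?_, ?_, MonoidHom.rangeRestrict_surjective Ψ,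
      ?_, rfl⟩
    · exact ‹Finite ↥Ψ.range›
    · show Group.IsNilpotent ↥Ψ.range
      haveI : Fact (Nat.Prime 2) := ⟨Nat.prime_two⟩
      have hpg : IsPGroup 2 ↥Ψ.range := by
        rintro ⟨q, hq⟩
        obtain ⟨γ', rfl⟩ := hq
        refine ⟨k, ?_⟩
        apply Subtype.ext
        have hcoe : ((((⟨Ψ γ', ⟨γ', rfl⟩⟩ : ↥Ψ.range)) ^ (2 ^ k : ℕ) : ↥Ψ.range) :
            PSL2 (Stmt11Aux.Rk k)) = (Ψ γ') ^ (2 ^ k : ℕ) := by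
          push_cast
          rfl
        rw [hcoe]
        have hker : redPSL (↑γ' : PSL2 GaussianInt) = 1 := γ'.2
        have := Stmt11Aux.order_lemma k hk1 (↑γ' : PSL2 GaussianInt) hker
        exact this
      exact hpg.isNilpotent
    · intro hcon
      apply hdet
      exact congrArg Subtype.val hcon
  refine le_trans (sInf_le hmem) ?_
  rw [Nat.cast_le]
  have h1 : Nat.card ↥Ψ.range ≤ Nat.card (PSL2 (Stmt11Aux.Rk k)) :=
    Nat.card_le_card_of_injective _ Subtype.val_injective
  have h2 := Stmt11Aux.card_PSL_Rk k
  have h3 : 8 * k = 8 * (B + 3) * n := by rw [hkdef]; ring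
  calc Nat.card ↥Ψ.range ≤ 2 ^ (8 * k) := le_trans h1 h2
    _ = 2 ^ (8 * (B + 3) * n) := by rw [h3]
    _ ≤ 8 * (B + 3) * 2 ^ (8 * (B + 3) * n) := Nat.le_mul_of_pos_left _ (by omega)
end

section
/- Let p be a prime and let Γ = ℤ/pℤ ≀ ℤ be the restricted wreath product, i.e., the semidirect product (⊕_{i∈ℤ} ℤ/pℤ) ⋊ ℤ where ℤ acts by shifting coordinates, with generating set X = {t, δ₀}, where t is a generator of the ℤ factor and δ₀ is the element of the direct sum supported at 0 with value 1. Then F_{Γ,X}(n) ≽ n^{1/2}: there exists a natural number M ≥ 1 such that ⌊√n⌋ ≤ M · F_{Γ,X}(M·n) for all n ≥ 1 (inequality in ℕ∞). -/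
open scoped ENat

/-- Shift-by-one automorphism of `ℤ →₀ A`. -/
noncomputable def shiftAut (A : Type*) [AddCommGroup A] : (ℤ →₀ A) ≃+ (ℤ →₀ A) :=
  Finsupp.domCongr (Equiv.addRight (1 : ℤ))

/-- The shift action of `ℤ` on the base group of the wreath product. -/
noncomputable def shiftAction (A : Type*) [AddCommGroup A] :
    Multiplicative ℤ →* MulAut (Multiplicative (ℤ →₀ A)) :=
  zpowersHom _ (AddEquiv.toMultiplicative (shiftAut A))

/-- The restricted wreath product `A ≀ ℤ = (⊕_{i ∈ ℤ} A) ⋊ ℤ`, where `ℤ` acts by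
shifting coordinates. -/
noncomputable abbrev WreathZ (A : Type*) [AddCommGroup A] : Type _ :=
  SemidirectProduct (Multiplicative (ℤ →₀ A)) (Multiplicative ℤ) (shiftAction A)

/-- The generator `t` of the acting `ℤ` factor. -/
noncomputable def tGen (A : Type*) [AddCommGroup A] : WreathZ A :=
  SemidirectProduct.inr (Multiplicative.ofAdd (1 : ℤ))

/-- The element `δ₀` of the direct sum supported at `0` with value `a`. -/
noncomputable def deltaGen {A : Type*} [AddCommGroup A] (a : A) : WreathZ A :=
  SemidirectProduct.inl (Multiplicative.ofAdd (Finsupp.single (0 : ℤ) a))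


open Multiplicative SemidirectProduct Finsupp in
lemma aux_shiftAut_single {A : Type*} [AddCommGroup A] (j : ℤ) (a : A) :
    shiftAut A (Finsupp.single j a) = Finsupp.single (j+1) a := by
  simp [shiftAut]

open Multiplicative SemidirectProduct Finsupp in
lemma aux_tGen_conj {A : Type*} [AddCommGroup A] (f : ℤ →₀ A) :
    tGen A * SemidirectProduct.inl (ofAdd f) * (tGen A)⁻¹ =
      SemidirectProduct.inl (ofAdd (shiftAut A f)) := by
  rw [tGen, ← map_inv, ← SemidirectProduct.inl_aut]
  simp [shiftAction, zpowersHom_apply]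

open Multiplicative SemidirectProduct Finsupp in
lemma aux_tpow_conj {A : Type*} [AddCommGroup A] (k : ℕ) (j : ℤ) (a : A) :
    (tGen A)^k * SemidirectProduct.inl (ofAdd (Finsupp.single j a)) * ((tGen A)^k)⁻¹ =
      SemidirectProduct.inl (ofAdd (Finsupp.single (j + k) a)) := by
  induction k generalizing j with
  | zero => simp
  | succ k ih =>
    have h1 : (tGen A)^(k+1) = tGen A * (tGen A)^k := pow_succ' _ _
    rw [h1, mul_inv_rev]
    calc tGen A * (tGen A)^k * SemidirectProduct.inl (ofAdd (Finsupp.single j a)) *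
          (((tGen A)^k)⁻¹ * (tGen A)⁻¹)
        = tGen A * ((tGen A)^k * SemidirectProduct.inl (ofAdd (Finsupp.single j a)) *
            ((tGen A)^k)⁻¹) * (tGen A)⁻¹ := by group
      _ = SemidirectProduct.inl (ofAdd (shiftAut A (Finsupp.single (j + k) a))) := by
            rw [ih, aux_tGen_conj]
      _ = SemidirectProduct.inl (ofAdd (Finsupp.single (j + (k+1 : ℕ)) a)) := by
            rw [aux_shiftAut_single]; push_cast; ring_nf

open Multiplicative SemidirectProduct Finsupp in
lemma aux_deltaGen_pow {A : Type*} [AddCommGroup A] (a : A) (v : ℕ) :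
    (deltaGen a)^v = SemidirectProduct.inl (ofAdd (Finsupp.single (0:ℤ) (v • a))) := by
  rw [deltaGen, ← map_pow, ← ofAdd_nsmul, Finsupp.smul_single]

open Multiplicative SemidirectProduct Finsupp in
lemma aux_word_prod {A : Type*} [AddCommGroup A] (d : A) (e : ℕ → ℕ) (m : ℕ) :
    ((List.range m).flatMap (fun i => List.replicate (e i) (deltaGen d) ++ [tGen A])).prod
      = SemidirectProduct.inl
          (ofAdd (∑ i ∈ Finset.range m, Finsupp.single (i : ℤ) (e i • d))) * (tGen A)^m := by
  induction m with
  | zero => simp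
  | succ m ih =>
    rw [List.range_succ, List.flatMap_append, List.prod_append, ih, List.flatMap_singleton,
      List.prod_append, List.prod_replicate, List.prod_singleton, aux_deltaGen_pow,
      Finset.sum_range_succ]
    have key := aux_tpow_conj (A := A) m (0 : ℤ) (e m • d)
    have : (tGen A)^m * SemidirectProduct.inl (ofAdd (Finsupp.single (0:ℤ) (e m • d)))
        = SemidirectProduct.inl (ofAdd (Finsupp.single ((0:ℤ) + m) (e m • d))) * (tGen A)^m := by
      rw [← key]; group
    calc SemidirectProduct.inl (ofAdd (∑ i ∈ Finset.range m, Finsupp.single (i : ℤ) (e i • d))) *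
          (tGen A)^m * (SemidirectProduct.inl (ofAdd (Finsupp.single (0:ℤ) (e m • d))) * tGen A)
        = SemidirectProduct.inl (ofAdd (∑ i ∈ Finset.range m, Finsupp.single (i : ℤ) (e i • d))) *
          ((tGen A)^m * SemidirectProduct.inl (ofAdd (Finsupp.single (0:ℤ) (e m • d)))) * tGen A := by
          group
      _ = SemidirectProduct.inl (ofAdd (∑ i ∈ Finset.range m, Finsupp.single (i : ℤ) (e i • d))) *
          (SemidirectProduct.inl (ofAdd (Finsupp.single ((0:ℤ) + m) (e m • d))) * (tGen A)^m) * tGen A := by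
          rw [this]
      _ = SemidirectProduct.inl
            (ofAdd ((∑ i ∈ Finset.range m, Finsupp.single (i : ℤ) (e i • d)) +
              Finsupp.single ((m:ℤ)) (e m • d))) * (tGen A)^(m+1) := by
          rw [ofAdd_add, map_mul, pow_succ]
          group

open Multiplicative SemidirectProduct Finsupp in
lemma aux_detect (p : ℕ) [NeZero p] (v : ℕ → ZMod p) (m K : ℕ)
    (hcon : ∀ k, 1 ≤ k → k ≤ K → ∀ j < k,
      ∑ i ∈ (Finset.range m).filter (fun i => i % k = j), v i = 0)
    {Q : Type} [Group Q] [Finite Q] (φ : WreathZ (ZMod p) →* Q)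
    (hk : orderOf (φ (tGen (ZMod p))) ≤ K) :
    φ (SemidirectProduct.inl (ofAdd (∑ i ∈ Finset.range m, Finsupp.single (i:ℤ) (v i)))) = 1 := by
  classical
  set τ := φ (tGen (ZMod p)) with hτ
  set k := orderOf τ with hkdef
  have hkpos : 0 < k := orderOf_pos τ
  have hτk : τ ^ k = 1 := pow_orderOf_eq_one τ
  set ψ : Multiplicative (ℤ →₀ ZMod p) →* Q :=
    φ.comp (SemidirectProduct.inl (φ := shiftAction (ZMod p))) with hψ
  letI : CommGroup ψ.range :=
    { (inferInstance : Group ψ.range) with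
      mul_comm := by
        rintro ⟨-, x, rfl⟩ ⟨-, y, rfl⟩
        ext
        show ψ x * ψ y = ψ y * ψ x
        rw [← map_mul, ← map_mul, mul_comm] }
  set χ : (ℤ →₀ ZMod p) →+ Additive ψ.range :=
    AddMonoidHom.mk' (fun f => Additive.ofMul (ψ.rangeRestrict (ofAdd f)))
      (fun f g => by
        simp only [ofAdd_add, map_mul]
        rfl) with hχ
  have hχcoe : ∀ f, ((Additive.toMul (χ f) : ψ.range) : Q)
      = φ (SemidirectProduct.inl (ofAdd f)) := fun f => rfl
  have step1 : ∀ (j : ℤ) (a : ZMod p), χ (Finsupp.single (j + k) a) = χ (Finsupp.single j a) := by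
    intro j a
    have h := congrArg φ (aux_tpow_conj (A := ZMod p) k j a)
    rw [map_mul, map_mul, map_pow, map_inv, map_pow] at h
    rw [← hτ, hτk] at h
    simp only [one_mul, inv_one, mul_one] at h
    have : ((Additive.toMul (χ (Finsupp.single (j + k) a)) : ψ.range) : Q)
        = ((Additive.toMul (χ (Finsupp.single j a)) : ψ.range) : Q) := by
      rw [hχcoe, hχcoe, ← h]
    exact congrArg Additive.ofMul (Subtype.ext this)
  have step2 : ∀ (q : ℕ) (j : ℤ) (a : ZMod p),
      χ (Finsupp.single (j + k * q) a) = χ (Finsupp.single j a) := by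
    intro q
    induction q with
    | zero => simp
    | succ q ih =>
      intro j a
      have hc : (j : ℤ) + k * (q + 1 : ℕ) = (j + k * q) + k := by push_cast; ring
      rw [hc, step1, ih]
  have step3 : ∀ (i : ℕ) (a : ZMod p),
      χ (Finsupp.single (i : ℤ) a) = χ (Finsupp.single ((i % k : ℕ) : ℤ) a) := by
    intro i a
    have hcast : ((i : ℕ) : ℤ) = ((i % k : ℕ) : ℤ) + (k : ℤ) * ((i / k : ℕ) : ℤ) := by
      conv_lhs => rw [← Nat.mod_add_div i k]
      push_cast; ring
    rw [hcast, step2]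
  have main : χ (∑ i ∈ Finset.range m, Finsupp.single (i:ℤ) (v i)) = 0 := by
    rw [map_sum]
    calc ∑ i ∈ Finset.range m, χ (Finsupp.single (i:ℤ) (v i))
        = ∑ i ∈ Finset.range m, χ (Finsupp.single ((i % k : ℕ) : ℤ) (v i)) :=
          Finset.sum_congr rfl fun i _ => step3 i (v i)
      _ = ∑ j ∈ Finset.range k, ∑ i ∈ (Finset.range m).filter (fun i => i % k = j),
            χ (Finsupp.single ((i % k : ℕ) : ℤ) (v i)) :=
          (Finset.sum_fiberwise_of_maps_to
            (fun i _ => Finset.mem_range.2 (Nat.mod_lt i hkpos)) _).symm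
      _ = ∑ j ∈ Finset.range k, ∑ i ∈ (Finset.range m).filter (fun i => i % k = j),
            χ (Finsupp.single ((j : ℕ) : ℤ) (v i)) := by
          refine Finset.sum_congr rfl fun j _ => Finset.sum_congr rfl fun i hi => ?_
          rw [(Finset.mem_filter.1 hi).2]
      _ = ∑ j ∈ Finset.range k,
            (χ.comp (Finsupp.singleAddHom ((j : ℕ) : ℤ)))
              (∑ i ∈ (Finset.range m).filter (fun i => i % k = j), v i) := by
          refine Finset.sum_congr rfl fun j _ => ?_
          rw [map_sum]
          rfl
      _ = 0 := by
          refine Finset.sum_eq_zero fun j hj => ?_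
          rw [hcon k hkpos hk j (Finset.mem_range.1 hj), map_zero]
  have : ((Additive.toMul (χ (∑ i ∈ Finset.range m, Finsupp.single (i:ℤ) (v i))) : ψ.range) : Q)
      = ((1 : ψ.range) : Q) := by rw [main]; rfl
  rw [hχcoe] at this
  simpa using this

lemma aux_exists_vec (p : ℕ) (hp : 2 ≤ p) (n : ℕ) :
    ∃ v : ℕ → ZMod p,
      (∃ i < n + 1, v i ≠ 0) ∧ (∀ i, n + 1 ≤ i → v i = 0) ∧
      (∀ k, 1 ≤ k → k ≤ n.sqrt → ∀ j < k,
        ∑ i ∈ (Finset.range (n+1)).filter (fun i => i % k = j), v i = 0) := by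
  classical
  haveI : NeZero p := ⟨by omega⟩
  set K := n.sqrt with hK
  set m := n + 1 with hm
  set S := (i : Fin K) × Fin (i.1 + 1) with hS
  set L : (Fin m → ZMod p) → (S → ZMod p) :=
    fun w s => ∑ i : Fin m, if i.1 % (s.1.1 + 1) = s.2.1 then w i else 0 with hL
  have hcardS : Fintype.card S ≤ n := by
    rw [Fintype.card_sigma]
    calc ∑ i : Fin K, Fintype.card (Fin (i.1+1)) ≤ ∑ _i : Fin K, K := by
          refine Finset.sum_le_sum fun i _ => ?_
          simp only [Fintype.card_fin]
          omega
      _ = K * K := by simp [Finset.sum_const, mul_comm]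
      _ ≤ n := Nat.sqrt_le n
  have hlt : Fintype.card (S → ZMod p) < Fintype.card (Fin m → ZMod p) := by
    rw [Fintype.card_fun, Fintype.card_fun, ZMod.card, Fintype.card_fin]
    exact Nat.pow_lt_pow_right (by omega) (by omega)
  obtain ⟨a, b, hne, heq⟩ := Fintype.exists_ne_map_eq_of_card_lt L hlt
  set w : Fin m → ZMod p := a - b with hw
  have hw0 : w ≠ 0 := sub_ne_zero.2 hne
  have hLw : ∀ s, L w s = 0 := by
    intro s
    have hab : L a s = L b s := congrFun heq s
    simp only [hL] at hab ⊢
    simp only [hw, Pi.sub_apply]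
    have hsplit : ∀ i : Fin m, (if i.1 % (s.1.1 + 1) = s.2.1 then a i - b i else 0)
        = (if i.1 % (s.1.1 + 1) = s.2.1 then a i else 0)
          - (if i.1 % (s.1.1 + 1) = s.2.1 then b i else 0) := by
      intro i; split <;> simp
    rw [Finset.sum_congr rfl fun i _ => hsplit i, Finset.sum_sub_distrib, hab, sub_self]
  set v : ℕ → ZMod p := fun i => if h : i < m then w ⟨i, h⟩ else 0 with hv
  refine ⟨v, ?_, ?_, ?_⟩
  · obtain ⟨i, hi⟩ := Function.ne_iff.1 hw0
    exact ⟨i.1, i.2, by simpa [hv, i.2] using hi⟩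
  · intro i hi
    simp [hv]; omega
  · intro k hk1 hkK j hj
    have hs1 : k - 1 < K := by omega
    set s : S := ⟨⟨k - 1, hs1⟩, ⟨j, by show j < k - 1 + 1; omega⟩⟩ with hs
    have hkk : s.1.1 + 1 = k := by show k - 1 + 1 = k; omega
    have := hLw s
    simp only [hL, hkk] at this
    rw [Finset.sum_filter]
    have hfin : ∑ i : Fin m, (if i.1 % k = s.2.1 then w i else 0)
        = ∑ i ∈ Finset.range m, (if i % k = j then v i else 0) := by
      rw [← Fin.sum_univ_eq_sum_range (fun i => if i % k = j then v i else 0) m]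
      refine Finset.sum_congr rfl fun i _ => ?_
      have hs2 : (s.2 : ℕ) = j := rfl
      simp [hv, i.2, hs2]
    rw [hfin] at this
    exact this

theorem stmt15 (p : ℕ) (hp : p.Prime) :
    ∃ M : ℕ, 1 ≤ M ∧ ∀ n : ℕ, 1 ≤ n →
      ((Nat.sqrt n : ℕ) : ℕ∞) ≤
        (M : ℕ∞) * FGrowth allFiniteClass
          ({tGen (ZMod p), deltaGen (1 : ZMod p)} : Set (WreathZ (ZMod p))) (M * n) := by
  classical
  haveI : NeZero p := ⟨hp.pos.ne'⟩
  have hp2 : 2 ≤ p := hp.two_le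
  refine ⟨2 * (p + 1), by omega, fun n hn => ?_⟩
  set M := 2 * (p + 1) with hM
  set X : Set (WreathZ (ZMod p)) := {tGen (ZMod p), deltaGen (1 : ZMod p)} with hX
  obtain ⟨v, ⟨i₀, hi₀m, hi₀⟩, hsupp, hcon⟩ := aux_exists_vec p hp2 n
  set m := n + 1 with hm
  set K := n.sqrt with hK
  set F : ℤ →₀ ZMod p := ∑ i ∈ Finset.range m, Finsupp.single (i:ℤ) (v i) with hF
  set g : WreathZ (ZMod p) := SemidirectProduct.inl (Multiplicative.ofAdd F) with hg
  -- g ≠ 1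
  have hFi₀ : F (i₀ : ℤ) = v i₀ := by
    rw [hF, Finsupp.finset_sum_apply]
    rw [Finset.sum_eq_single i₀]
    · exact Finsupp.single_eq_same
    · intro i _ hne
      exact Finsupp.single_eq_of_ne' (by exact_mod_cast hne)
    · intro h
      exact absurd (Finset.mem_range.2 hi₀m) h
  have hgne : g ≠ 1 := by
    intro h
    rw [hg] at h
    have : Multiplicative.ofAdd F = 1 := by
      apply SemidirectProduct.inl_injective (φ := shiftAction (ZMod p))
      rw [h, map_one]
    have hF0 : F = 0 := this
    rw [hF0] at hFi₀
    exact hi₀ (by simpa using hFi₀.symm)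
  -- word length
  have hword : wordLenLE X g (M * n) := by
    set e : ℕ → ℕ := fun i => (v i).val with he
    refine ⟨((List.range m).flatMap fun i =>
        List.replicate (e i) (deltaGen (1 : ZMod p)) ++ [tGen (ZMod p)]) ++
        List.replicate m (tGen (ZMod p))⁻¹, ?_, ?_, ?_⟩
    · rw [List.length_append, List.length_replicate, List.length_flatMap]
      have hsum : (List.map (List.length ∘ fun i =>
          List.replicate (e i) (deltaGen (1 : ZMod p)) ++ [tGen (ZMod p)])
          (List.range m)).sum ≤ m * p := by
        calc (List.map (List.length ∘ fun i =>
              List.replicate (e i) (deltaGen (1 : ZMod p)) ++ [tGen (ZMod p)])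
              (List.range m)).sum
            ≤ (List.map (List.length ∘ fun i =>
                List.replicate (e i) (deltaGen (1 : ZMod p)) ++ [tGen (ZMod p)])
                (List.range m)).length • p := by
              refine List.sum_le_card_nsmul _ p ?_
              intro x hx
              obtain ⟨i, -, rfl⟩ := List.mem_map.1 hx
              simp only [Function.comp_apply, List.length_append, List.length_replicate,
                List.length_singleton]
              have := ZMod.val_lt (v i)
              simp only [he]
              omega
          _ = m * p := by simp [smul_eq_mul]
      have hmn : m * p + m ≤ M * n := by
        rw [hM, hm]
        nlinarith
      simp only [Function.comp_def] at hsum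
      omega
    · intro x hx
      rcases List.mem_append.1 hx with hx | hx
      · rcases List.mem_flatMap.1 hx with ⟨i, _, hxi⟩
        rcases List.mem_append.1 hxi with hxi | hxi
        · left
          rw [List.eq_of_mem_replicate hxi, hX]
          exact Set.mem_insert_of_mem _ rfl
        · left
          rw [List.mem_singleton.1 hxi, hX]
          exact Set.mem_insert _ _
      · right
        rw [List.eq_of_mem_replicate hx, inv_inv, hX]
        exact Set.mem_insert _ _
    · rw [List.prod_append, aux_word_prod, List.prod_replicate, inv_pow, mul_assoc,
        mul_inv_cancel, mul_one, hg, hF]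
      have hsm : ∀ i : ℕ, (e i) • (1 : ZMod p) = v i := by
        intro i
        rw [nsmul_eq_mul, mul_one]
        exact ZMod.natCast_rightInverse (v i)
      simp only [hsm]
  -- detection bound
  have hD : ((K : ℕ∞) + 1) ≤ DQuot allFiniteClass g := by
    refine le_sInf fun c hc => ?_
    obtain ⟨Q, φ, hfin, -, -, hφg, rfl⟩ := hc
    haveI : Finite ↥Q := hfin
    have hord : K + 1 ≤ orderOf (φ (tGen (ZMod p))) := by
      by_contra hlt
      push_neg at hlt
      have hle : orderOf (φ (tGen (ZMod p))) ≤ K := by omega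
      exact hφg (aux_detect p v m K hcon φ hle)
    have hcard : orderOf (φ (tGen (ZMod p))) ≤ Nat.card ↥Q := by
      letI := Fintype.ofFinite ↥Q
      rw [Nat.card_eq_fintype_card]
      exact orderOf_le_card_univ
    have : K + 1 ≤ Nat.card ↥Q := le_trans hord hcard
    exact_mod_cast this
  -- assemble
  have hFG : DQuot allFiniteClass g ≤
      FGrowth allFiniteClass X (M * n) := by
    calc DQuot allFiniteClass g
        ≤ ⨆ (_ : wordLenLE X g (M * n)), DQuot allFiniteClass g :=
          le_iSup (fun _ : wordLenLE X g (M * n) => DQuot allFiniteClass g) hword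
      _ ≤ ⨆ (_ : g ≠ 1) (_ : wordLenLE X g (M * n)), DQuot allFiniteClass g :=
          le_iSup (fun _ : g ≠ 1 =>
            ⨆ (_ : wordLenLE X g (M * n)), DQuot allFiniteClass g) hgne
      _ ≤ FGrowth allFiniteClass X (M * n) := le_iSup
          (fun γ => ⨆ (_ : γ ≠ 1) (_ : wordLenLE X γ (M * n)), DQuot allFiniteClass γ) g
  calc ((Nat.sqrt n : ℕ) : ℕ∞) ≤ (K : ℕ∞) + 1 := by rw [hK]; exact le_self_add
    _ ≤ FGrowth allFiniteClass X (M * n) := le_trans hD hFG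
    _ ≤ (M : ℕ∞) * FGrowth allFiniteClass X (M * n) := le_mul_of_one_le_left zero_le
        (by exact_mod_cast Nat.one_le_iff_ne_zero.2 (by omega))
end

section
/- Let Γ = ℤ ≀ ℤ be the restricted wreath product, i.e., the semidirect product (⊕_{i∈ℤ} ℤ) ⋊ ℤ where ℤ acts by shifting coordinates, with generating set X = {t, δ₀}, where t is a generator of the acting ℤ factor and δ₀ is the element of the direct sum supported at 0 with value 1. Then F_{Γ,X}(n) ≽ n^{1/4}: there exists a natural number M ≥ 1 such that ⌊n^{1/4}⌋ ≤ M · F_{Γ,X}(M·n) for all n ≥ 1 (inequality in ℕ∞). -/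
open scoped ENat

noncomputable def baseElt (P : ℤ →₀ ℤ) : WreathZ ℤ :=
  SemidirectProduct.inl (Multiplicative.ofAdd P)

noncomputable def PofEps (ε : ℕ → ℤ) (D : ℕ) : ℤ →₀ ℤ :=
  ∑ i ∈ Finset.range D, Finsupp.single (i : ℤ) (ε i)

def coeffSum (ε : ℕ → ℤ) (D d j : ℕ) : ℤ :=
  ∑ i ∈ (Finset.range D).filter (fun i => i % d = j), ε i

lemma baseElt_mul (P Q : ℤ →₀ ℤ) : baseElt P * baseElt Q = baseElt (P + Q) := by
  simp [baseElt, ← map_mul, ← ofAdd_add]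

lemma tGen_conj (i : ℤ) (a : ℤ) :
    tGen ℤ * baseElt (Finsupp.single i a) * (tGen ℤ)⁻¹ = baseElt (Finsupp.single (i+1) a) := by
  have h := SemidirectProduct.inl_aut (φ := shiftAction ℤ) (Multiplicative.ofAdd (1 : ℤ))
      (Multiplicative.ofAdd (Finsupp.single i a))
  have h2 : shiftAction ℤ (Multiplicative.ofAdd (1 : ℤ)) (Multiplicative.ofAdd (Finsupp.single i a))
      = Multiplicative.ofAdd (Finsupp.single (i+1) a) := by
    show (zpowersHom _ (AddEquiv.toMultiplicative (shiftAut ℤ)))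
        (Multiplicative.ofAdd (1 : ℤ)) _ = _
    rw [zpowersHom_apply, toAdd_ofAdd, zpow_one]
    show Multiplicative.ofAdd ((shiftAut ℤ) (Finsupp.single i a)) = _
    congr 1
    show Finsupp.equivMapDomain (Equiv.addRight (1:ℤ)) (Finsupp.single i a) = _
    rw [Finsupp.equivMapDomain_single, Equiv.coe_addRight]
  rw [h2] at h
  rw [baseElt, baseElt, tGen, h, ← map_inv]

lemma tpow_conj (k : ℕ) (i : ℤ) (a : ℤ) :
    (tGen ℤ)^k * baseElt (Finsupp.single i a) * ((tGen ℤ)^k)⁻¹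
      = baseElt (Finsupp.single (i+k) a) := by
  induction k with
  | zero => simp
  | succ k ih =>
    have h1 : tGen ℤ * ((tGen ℤ)^k * baseElt (Finsupp.single i a) * ((tGen ℤ)^k)⁻¹) * (tGen ℤ)⁻¹
        = (tGen ℤ)^(k+1) * baseElt (Finsupp.single i a) * ((tGen ℤ)^(k+1))⁻¹ := by
      group
    rw [← h1, ih, tGen_conj]
    congr 1
    push_cast
    ring_nf


noncomputable def dword (z : ℤ) : List (WreathZ ℤ) :=
  if z = 1 then [deltaGen 1] else if z = -1 then [(deltaGen 1)⁻¹] else []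

lemma dword_prod (z : ℤ) (hz : |z| ≤ 1) : (dword z).prod = baseElt (Finsupp.single 0 z) := by
  rw [abs_le] at hz
  rcases hz with ⟨h1, h2⟩
  interval_cases z
  · show List.prod [(deltaGen 1)⁻¹] = _
    rw [List.prod_singleton, deltaGen, baseElt, ← map_inv]
    congr 1
    rw [← ofAdd_neg, ← Finsupp.single_neg]
  · show List.prod ([] : List (WreathZ ℤ)) = _
    rw [List.prod_nil, Finsupp.single_zero, baseElt, ofAdd_zero, map_one]
  · show List.prod [deltaGen 1] = _
    rw [List.prod_singleton]
    rfl

lemma dword_len (z : ℤ) : (dword z).length ≤ 1 := by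
  rw [dword]; split_ifs <;> simp

lemma dword_mem {z : ℤ} {x : WreathZ ℤ} (hx : x ∈ dword z) :
    x = deltaGen 1 ∨ x = (deltaGen 1)⁻¹ := by
  rw [dword] at hx
  split_ifs at hx <;> simp_all

lemma word_aux (ε : ℕ → ℤ) (hb : ∀ i, |ε i| ≤ 1) (D : ℕ) :
    ((List.range D).flatMap (fun i => dword (ε i) ++ [tGen ℤ])).prod
      = baseElt (PofEps ε D) * (tGen ℤ)^D := by
  induction D with
  | zero => simp [PofEps, baseElt]
  | succ D ih =>
    rw [List.range_succ, List.flatMap_append, List.prod_append, ih]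
    simp only [List.flatMap_cons, List.flatMap_nil, List.append_nil, List.prod_append,
      List.prod_cons, List.prod_nil, dword_prod _ (hb D)]
    have hc : (tGen ℤ)^D * baseElt (Finsupp.single 0 (ε D))
        = baseElt (Finsupp.single (D : ℤ) (ε D)) * (tGen ℤ)^D := by
      have := tpow_conj D 0 (ε D)
      rw [zero_add] at this
      rw [← this]
      group
    have hP : PofEps ε (D+1) = PofEps ε D + Finsupp.single (D : ℤ) (ε D) := by
      rw [PofEps, PofEps, Finset.sum_range_succ]
    rw [hP, ← baseElt_mul, mul_one,
      ← mul_assoc (baseElt (PofEps ε D) * tGen ℤ ^ D) _ (tGen ℤ),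
      mul_assoc (baseElt (PofEps ε D)) (tGen ℤ ^ D) _, hc,
      ← mul_assoc (baseElt (PofEps ε D)) _ (tGen ℤ ^ D),
      mul_assoc _ (tGen ℤ ^ D) (tGen ℤ), ← pow_succ]

lemma word_len_aux (ε : ℕ → ℤ) (D : ℕ) :
    ((List.range D).flatMap (fun i => dword (ε i) ++ [tGen ℤ])).length ≤ 2 * D := by
  induction D with
  | zero => simp
  | succ D ih =>
    rw [List.range_succ, List.flatMap_append, List.length_append]
    have : ((List.flatMap (fun i => dword (ε i) ++ [tGen ℤ]) [D])).length ≤ 2 := by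
      simp only [List.flatMap_cons, List.flatMap_nil, List.append_nil, List.length_append]
      have := dword_len (ε D)
      simp only [List.length_singleton]
      omega
    omega

lemma word_lemma (ε : ℕ → ℤ) (hb : ∀ i, |ε i| ≤ 1) (D : ℕ) :
    wordLenLE ({tGen ℤ, deltaGen (1 : ℤ)} : Set (WreathZ ℤ)) (baseElt (PofEps ε D)) (3 * D) := by
  refine ⟨(List.range D).flatMap (fun i => dword (ε i) ++ [tGen ℤ])
      ++ List.replicate D (tGen ℤ)⁻¹, ?_, ?_, ?_⟩
  · rw [List.length_append, List.length_replicate]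
    have := word_len_aux ε D
    omega
  · intro x hx
    rw [List.mem_append] at hx
    rcases hx with hx | hx
    · rw [List.mem_flatMap] at hx
      obtain ⟨i, -, hx⟩ := hx
      rw [List.mem_append] at hx
      rcases hx with hx | hx
      · rcases dword_mem hx with rfl | rfl
        · exact Or.inl (Set.mem_insert_iff.mpr (Or.inr rfl))
        · exact Or.inr (by rw [inv_inv]; exact Set.mem_insert_iff.mpr (Or.inr rfl))
      · rw [List.mem_singleton] at hx
        subst hx
        exact Or.inl (Set.mem_insert _ _)
    · rw [List.eq_of_mem_replicate hx, inv_inv]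
      exact Or.inr (Set.mem_insert _ _)
  · rw [List.prod_append, word_aux ε hb D, List.prod_replicate, inv_pow,
      mul_assoc, mul_inv_cancel, mul_one]

lemma zpow_finset_sum {G : Type*} [CommGroup G] {α : Type*} (x : G) (s : Finset α) (f : α → ℤ) :
    x ^ (∑ i ∈ s, f i) = ∏ i ∈ s, x ^ f i := by
  classical
  induction s using Finset.induction with
  | empty => simp
  | insert _ _ h ih => rw [Finset.sum_insert h, Finset.prod_insert h, zpow_add, ih]

open scoped IsMulCommutative in
lemma kill {Q : Type*} [Group Q] [Finite Q] (φ : WreathZ ℤ →* Q) (hφ : Function.Surjective φ)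
    (D : ℕ) (ε : ℕ → ℤ)
    (hdvd : ∀ d e : ℕ, 1 ≤ d → 1 ≤ e → d * e ≤ Nat.card Q →
      ∀ j, (e : ℤ) ∣ coeffSum ε D d j) :
    φ (baseElt (PofEps ε D)) = 1 := by
  classical
  set ι : Multiplicative (ℤ →₀ ℤ) →* Q := φ.comp SemidirectProduct.inl with hι
  haveI hBn : ι.range.Normal := by
    rw [hι, MonoidHom.range_comp, SemidirectProduct.range_inl_eq_ker_rightHom]
    exact Subgroup.Normal.map inferInstance φ hφ
  set B := ι.range with hB
  set d := Nat.card (Q ⧸ B) with hd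
  set e := Nat.card B with he
  have hd1 : 1 ≤ d := Nat.card_pos
  have he1 : 1 ≤ e := Nat.card_pos
  have hde : d * e ≤ Nat.card Q := by
    rw [Subgroup.card_eq_card_quotient_mul_card_subgroup B]
  set T : Q := φ (tGen ℤ) with hT
  set fQ : ℕ → Q := fun i => ι (Multiplicative.ofAdd (Finsupp.single (i : ℤ) 1)) with hfQ
  have hfmem : ∀ i, fQ i ∈ B := fun i => ⟨_, rfl⟩
  have conjd : ∀ i : ℕ, fQ (i + d) = T ^ d * fQ i * (T ^ d)⁻¹ := by
    intro i
    have h1 := congrArg φ (tpow_conj d (i : ℤ) 1)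
    rw [map_mul, map_mul, map_pow, map_inv, map_pow] at h1
    have h2 : ((i : ℤ) + (d : ℤ)) = ((i + d : ℕ) : ℤ) := by push_cast; ring
    rw [h2] at h1
    exact h1.symm
  have Td : T ^ d ∈ B := by
    have h1 : ((T ^ d : Q) : Q ⧸ B) = 1 := by
      rw [QuotientGroup.mk_pow, hd, pow_card_eq_one']
    exact (QuotientGroup.eq_one_iff _).mp h1
  have step : ∀ i : ℕ, fQ (i + d) = fQ i := by
    intro i
    rw [conjd i, Subgroup.mul_comm_of_mem_isMulCommutative B Td (hfmem i), mul_inv_cancel_right]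
  have per : ∀ i : ℕ, fQ i = fQ (i % d) := by
    have haux : ∀ m j : ℕ, fQ (j + d * m) = fQ j := by
      intro m
      induction m with
      | zero => simp
      | succ m ih =>
        intro j
        have : j + d * (m + 1) = (j + d * m) + d := by ring
        rw [this, step, ih]
    intro i
    conv_lhs => rw [← Nat.mod_add_div i d]
    exact haux _ _
  -- now work in the commutative subgroup B
  set R : Multiplicative (ℤ →₀ ℤ) →* B := ι.rangeRestrict with hR
  set G' : ℕ → B := fun i => R (Multiplicative.ofAdd (Finsupp.single (i : ℤ) 1)) with hG'
  have G'per : ∀ i : ℕ, G' i = G' (i % d) := by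
    intro i
    apply Subtype.ext
    have h1 : (G' i : Q) = fQ i := ι.coe_rangeRestrict _
    have h2 : (G' (i % d) : Q) = fQ (i % d) := ι.coe_rangeRestrict _
    rw [h1, h2, per]
  have expand : (Multiplicative.ofAdd (PofEps ε D))
      = ∏ i ∈ Finset.range D, (Multiplicative.ofAdd (Finsupp.single (i : ℤ) (1 : ℤ))) ^ (ε i) := by
    rw [PofEps, ofAdd_sum]
    refine Finset.prod_congr rfl fun i _ => ?_
    rw [← ofAdd_zsmul]
    congr 1
    rw [Finsupp.smul_single, smul_eq_mul, mul_one]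
  have key : R (Multiplicative.ofAdd (PofEps ε D)) = 1 := by
    rw [expand, map_prod]
    have e1 : ∀ i ∈ Finset.range D, R ((Multiplicative.ofAdd (Finsupp.single (i : ℤ) (1:ℤ))) ^ (ε i))
        = (G' (i % d)) ^ (ε i) := by
      intro i _
      rw [map_zpow]
      exact congrArg (fun x => x ^ ε i) (G'per i)
    rw [Finset.prod_congr rfl e1]
    rw [← Finset.prod_fiberwise_of_maps_to
      (fun i _ => Finset.mem_range.mpr (Nat.mod_lt i hd1)) (fun i => (G' (i % d)) ^ (ε i))]
    refine Finset.prod_eq_one fun j _ => ?_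
    have e2 : ∀ i ∈ (Finset.range D).filter (fun i => i % d = j),
        (G' (i % d)) ^ (ε i) = (G' j) ^ (ε i) := by
      intro i hi
      rw [(Finset.mem_filter.mp hi).2]
    rw [Finset.prod_congr rfl e2, ← zpow_finset_sum]
    obtain ⟨m, hm⟩ := hdvd d e hd1 he1 hde j
    rw [← coeffSum, hm, zpow_mul, zpow_natCast, he, pow_card_eq_one', one_zpow]
  have final : φ (baseElt (PofEps ε D)) = ((R (Multiplicative.ofAdd (PofEps ε D)) : B) : Q) := by
    rw [ι.coe_rangeRestrict]
    rfl
  rw [final, key, OneMemClass.coe_one]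

lemma PofEps_ne_zero (ε : ℕ → ℤ) (D : ℕ) (h : ∃ i, i < D ∧ ε i ≠ 0) : PofEps ε D ≠ 0 := by
  obtain ⟨i, hiD, hne⟩ := h
  intro h0
  have happ : (PofEps ε D) (i : ℤ) = ε i := by
    rw [PofEps, Finsupp.finset_sum_apply]
    rw [Finset.sum_eq_single i]
    · rw [Finsupp.single_apply, if_pos rfl]
    · intro k _ hki
      rw [Finsupp.single_apply, if_neg]
      exact fun hc => hki (Nat.cast_injective hc)
    · exact fun hc => absurd (Finset.mem_range.mpr hiD) hc
  rw [h0] at happ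
  exact hne (by simpa using happ.symm)

lemma exists_eps (s : ℕ) (hs : 1 ≤ s) : ∃ ε : ℕ → ℤ,
    (∀ i, |ε i| ≤ 1) ∧ (∃ i, i < (s+1)^4 ∧ ε i ≠ 0) ∧
    ∀ d, 1 ≤ d → d ≤ s → ∀ j, ((Nat.factorial s : ℤ)) ∣ coeffSum ε ((s+1)^4) d j := by
  classical
  set D := (s+1)^4 with hD
  haveI : NeZero (Nat.factorial s) := ⟨Nat.factorial_ne_zero s⟩
  set vI : (Fin D → Fin 2) → ℕ → ℤ := fun v i => if h : i < D then ((v ⟨i, h⟩ : ℕ) : ℤ) else 0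
    with hvI
  set F : (Fin D → Fin 2) → (Fin s → Fin (s+1) → ZMod (Nat.factorial s)) :=
    fun v d j => ((coeffSum (vI v) D (d.1+1) j.1 : ℤ) : ZMod (Nat.factorial s)) with hF
  have hcard : Fintype.card (Fin s → Fin (s+1) → ZMod (Nat.factorial s))
      < Fintype.card (Fin D → Fin 2) := by
    simp only [Fintype.card_fun, ZMod.card, Fintype.card_fin]
    calc ((Nat.factorial s) ^ (s+1)) ^ s = (Nat.factorial s) ^ ((s+1)*s) := by rw [← pow_mul]
    _ ≤ (s^s) ^ ((s+1)*s) := Nat.pow_le_pow_left (Nat.factorial_le_pow s) _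
    _ = s ^ (s*((s+1)*s)) := by rw [← pow_mul]
    _ ≤ (2^s) ^ (s*((s+1)*s)) := Nat.pow_le_pow_left (Nat.lt_two_pow_self (n := s)).le _
    _ = 2 ^ (s*(s*((s+1)*s))) := by rw [← pow_mul]
    _ < 2 ^ D := by
        apply Nat.pow_lt_pow_right one_lt_two
        have h1 : s^3 < (s+1)^3 := Nat.pow_lt_pow_left (Nat.lt_succ_self s) (by norm_num)
        calc s*(s*((s+1)*s)) = s^3*(s+1) := by ring
        _ < (s+1)^3*(s+1) := by
            exact Nat.mul_lt_mul_of_lt_of_le h1 le_rfl (Nat.succ_pos s)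
        _ = (s+1)^4 := by ring
  obtain ⟨v, w, hvw, hFvw⟩ := Fintype.exists_ne_map_eq_of_card_lt F hcard
  refine ⟨fun i => vI v i - vI w i, ?_, ?_, ?_⟩
  · intro i
    rw [hvI]
    simp only
    split_ifs with h
    · have h1 : (v ⟨i, h⟩ : ℕ) ≤ 1 := Nat.lt_succ_iff.mp (Fin.is_lt _)
      have h2 : (w ⟨i, h⟩ : ℕ) ≤ 1 := Nat.lt_succ_iff.mp (Fin.is_lt _)
      rw [abs_le]
      omega
    · simp
  · obtain ⟨x, hx⟩ := Function.ne_iff.mp hvw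
    refine ⟨x.1, x.isLt, ?_⟩
    have h1 : vI v x.1 = ((v x : ℕ) : ℤ) := by simp [hvI, x.isLt]
    have h2 : vI w x.1 = ((w x : ℕ) : ℤ) := by simp [hvI, x.isLt]
    simp only
    rw [h1, h2, sub_ne_zero]
    intro hc
    exact hx (Fin.ext (by exact_mod_cast hc))
  · intro d hd1 hds j
    by_cases hj : j < d
    · have hd' : d - 1 < s := by omega
      have hj' : j < s + 1 := by omega
      have heq := congrFun (congrFun hFvw ⟨d-1, hd'⟩) ⟨j, hj'⟩
      rw [hF] at heq
      simp only at heq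
      rw [Nat.sub_add_cancel hd1] at heq
      have hsub : coeffSum (fun i => vI v i - vI w i) D d j
          = coeffSum (vI v) D d j - coeffSum (vI w) D d j := by
        rw [coeffSum, coeffSum, coeffSum, ← Finset.sum_sub_distrib]
      rw [hsub, ← ZMod.intCast_zmod_eq_zero_iff_dvd]
      push_cast
      rw [heq, sub_self]
    · have hempty : (Finset.range D).filter (fun i => i % d = j) = ∅ := by
        rw [Finset.filter_eq_empty_iff]
        intro i _
        have := Nat.mod_lt i (show 0 < d by omega)
        omega
      rw [coeffSum, hempty, Finset.sum_empty]
      exact dvd_zero _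

theorem stmt16 :
    ∃ M : ℕ, 1 ≤ M ∧ ∀ n : ℕ, 1 ≤ n →
      ((Nat.sqrt (Nat.sqrt n) : ℕ) : ℕ∞) ≤
        (M : ℕ∞) * FGrowth allFiniteClass
          ({tGen ℤ, deltaGen (1 : ℤ)} : Set (WreathZ ℤ)) (M * n) := by
  refine ⟨48, by norm_num, ?_⟩
  intro n hn
  set s := Nat.sqrt (Nat.sqrt n) with hsdef
  have hs1 : 1 ≤ s := by
    rw [hsdef]
    have := Nat.sqrt_pos.mpr (Nat.sqrt_pos.mpr (show 0 < n by omega))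
    omega
  have hs4 : s ^ 4 ≤ n := by
    have h1 : s * s ≤ Nat.sqrt n := Nat.sqrt_le (Nat.sqrt n)
    calc s ^ 4 = (s * s) * (s * s) := by ring
    _ ≤ Nat.sqrt n * Nat.sqrt n := Nat.mul_le_mul h1 h1
    _ ≤ n := Nat.sqrt_le n
  obtain ⟨ε, hb, hnz, hdvd⟩ := exists_eps s hs1
  set D := (s + 1) ^ 4 with hDdef
  set γ := baseElt (PofEps ε D) with hγ
  have hγ1 : γ ≠ 1 := by
    intro h
    have h2 : SemidirectProduct.inl (φ := shiftAction ℤ) (Multiplicative.ofAdd (PofEps ε D))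
        = SemidirectProduct.inl (φ := shiftAction ℤ) (1 : Multiplicative (ℤ →₀ ℤ)) := by
      rw [map_one]; exact h
    exact PofEps_ne_zero ε D hnz (ofAdd_eq_one.mp (SemidirectProduct.inl_injective h2))
  have hword : wordLenLE ({tGen ℤ, deltaGen (1 : ℤ)} : Set (WreathZ ℤ)) γ (48 * n) := by
    obtain ⟨w, hl, hmem, hp⟩ := word_lemma ε hb D
    refine ⟨w, hl.trans ?_, hmem, hp⟩
    have h1 : (s + 1) ^ 4 ≤ 16 * s ^ 4 := by
      calc (s + 1) ^ 4 ≤ (2 * s) ^ 4 := Nat.pow_le_pow_left (by omega) 4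
      _ = 16 * s ^ 4 := by ring
    calc 3 * D ≤ 3 * (16 * s ^ 4) := by omega
    _ ≤ 48 * n := by omega
  have hDQ : ((s : ℕ∞)) ≤ DQuot allFiniteClass γ := by
    rw [DQuot]
    apply le_sInf
    rintro c ⟨Q, φ, hfin, -, hsurj, hdet, rfl⟩
    rcases le_or_gt (s : ℕ∞) ((Nat.card ↥Q : ℕ∞)) with h | h
    · exact h
    · exfalso
      apply hdet
      have hq : Nat.card ↥Q ≤ s := (Nat.cast_lt.mp h).le
      haveI := hfin
      apply kill φ hsurj
      intro d e hd he hde j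
      have hds : d ≤ s := by
        have : d ≤ d * e := Nat.le_mul_of_pos_right d (by omega)
        omega
      have hes : e ≤ s := by
        have : e ≤ d * e := Nat.le_mul_of_pos_left e (by omega)
        omega
      exact dvd_trans (Int.natCast_dvd_natCast.mpr (Nat.dvd_factorial (by omega) hes))
        (hdvd d hd hds j)
  have hFG : DQuot allFiniteClass γ
      ≤ FGrowth allFiniteClass ({tGen ℤ, deltaGen (1 : ℤ)} : Set (WreathZ ℤ)) (48 * n) := by
    rw [FGrowth]
    refine le_trans ?_ (le_iSup _ γ)
    refine le_trans ?_ (le_iSup _ hγ1)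
    exact le_iSup (fun _ : wordLenLE ({tGen ℤ, deltaGen (1 : ℤ)} : Set (WreathZ ℤ)) γ (48 * n)
      => DQuot allFiniteClass γ) hword
  calc ((s : ℕ∞)) ≤ FGrowth allFiniteClass ({tGen ℤ, deltaGen (1 : ℤ)} : Set (WreathZ ℤ)) (48 * n)
      := le_trans hDQ hFG
  _ ≤ ((48 : ℕ) : ℕ∞) * FGrowth allFiniteClass ({tGen ℤ, deltaGen (1 : ℤ)} : Set (WreathZ ℤ))
      (48 * n) := le_mul_of_one_le_left' (by exact_mod_cast Nat.one_le_iff_ne_zero.mpr (by norm_num))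
end
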